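/- arXiv:2209.00229 — 5 statements merged into one kernel-verified Lean document; each statement's English description precedes it below -/
import Mathlib

section
/- Let 0 < α_j < 1 and ω_{α_j}(t) = t^{α_j−1}/Γ(α_j). For a nonuniform time mesh 0 = t_0 < t_1 < ⋯ with k_n = t_n − t_{n−1}, the product-integration weight w_{np}^{(j)} = (1/(k_n k_p)) ∫_{t_{n−1}}^{t_n} ∫_{t_{p−1}}^{min{t, t_p}} ω_{α_j}(t−θ) dθ dt satisfies: (i) w_{np}^{(j)} > 0 for all 1 ≤ p ≤ n; (ii) for p ≤ n−1, w_{np}^{(j)} = (λ_{n,p} − λ_{n−1,p})/(k_n k_p Γ(α_j+2)) where λ_{n,p} = (t_n − t_{p−1})^{α_j+1} − (t_n − t_p)^{α_j+1}; (iii) w_{nn}^{(j)} = k_n^{α_j−1}/Γ(α_j+2). -/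
open MeasureTheory intervalIntegral Real

private lemma cont_rpow_aux (α : ℝ) (hα : 0 ≤ α) (c : ℝ) :
    Continuous (fun s : ℝ => (s - c) ^ α) := by
  rw [continuous_iff_continuousAt]
  intro x
  exact (Real.continuousAt_rpow_const _ _ (Or.inr hα)).comp
    (continuousAt_id.sub continuousAt_const)

private lemma inner_eval (α : ℝ) (hα : 0 < α) (a b s : ℝ) :
    ∫ θ in a..b, (s - θ) ^ (α - 1) / Real.Gamma α
      = ((s - a) ^ α - (s - b) ^ α) / (α * Real.Gamma α) := by
  rw [intervalIntegral.integral_div, intervalIntegral.integral_comp_sub_left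
    (fun x => x ^ (α - 1)) s, integral_rpow (Or.inl (by linarith))]
  have h1 : α - 1 + 1 = α := by ring
  rw [h1, div_div]

private lemma outer_eval (α : ℝ) (hα : 0 < α) (A B c : ℝ) :
    ∫ s in A..B, (s - c) ^ α = ((B - c) ^ (α + 1) - (A - c) ^ (α + 1)) / (α + 1) := by
  rw [intervalIntegral.integral_comp_sub_right (fun x => x ^ α) c]
  exact integral_rpow (Or.inl (by linarith))

private lemma key_off (α : ℝ) (hα : 0 < α) (a b c d : ℝ) (hda : d ≤ a) (hab : a ≤ b) :
    (∫ s in a..b, ∫ θ in c..(min s d), (s - θ) ^ (α - 1) / Real.Gamma α)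
      = (((b - c) ^ (α + 1) - (b - d) ^ (α + 1)) - ((a - c) ^ (α + 1) - (a - d) ^ (α + 1)))
        / ((α + 1) * (α * Real.Gamma α)) := by
  have hcongr : Set.EqOn (fun s : ℝ => ∫ θ in c..(min s d), (s - θ) ^ (α - 1) / Real.Gamma α)
      (fun s : ℝ => ((s - c) ^ α - (s - d) ^ α) / (α * Real.Gamma α)) (Set.uIcc a b) := by
    intro s hs
    rw [Set.uIcc_of_le hab] at hs
    have hmin : min s d = d := min_eq_right (le_trans hda hs.1)
    simp only [hmin]
    exact inner_eval α hα c d s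
  rw [intervalIntegral.integral_congr hcongr]
  have hi1 : IntervalIntegrable (fun s : ℝ => (s - c) ^ α) volume a b :=
    (cont_rpow_aux α hα.le c).intervalIntegrable a b
  have hi2 : IntervalIntegrable (fun s : ℝ => (s - d) ^ α) volume a b :=
    (cont_rpow_aux α hα.le d).intervalIntegrable a b
  rw [intervalIntegral.integral_div, intervalIntegral.integral_sub hi1 hi2,
    outer_eval α hα, outer_eval α hα]
  have h1 : α + 1 ≠ 0 := by linarith
  have h2 : α ≠ 0 := ne_of_gt hα
  rcases eq_or_ne (Real.Gamma α) 0 with hg | hg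
  · simp [hg]
  · field_simp
    ring

private lemma key_diag (α : ℝ) (hα : 0 < α) (a b : ℝ) (hab : a ≤ b) :
    (∫ s in a..b, ∫ θ in a..(min s b), (s - θ) ^ (α - 1) / Real.Gamma α)
      = (b - a) ^ (α + 1) / ((α + 1) * (α * Real.Gamma α)) := by
  have hcongr : Set.EqOn (fun s : ℝ => ∫ θ in a..(min s b), (s - θ) ^ (α - 1) / Real.Gamma α)
      (fun s : ℝ => ((s - a) ^ α) / (α * Real.Gamma α)) (Set.uIcc a b) := by
    intro s hs
    rw [Set.uIcc_of_le hab] at hs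
    have hmin : min s b = s := min_eq_left hs.2
    simp only [hmin]
    rw [inner_eval α hα a s s, sub_self, Real.zero_rpow (ne_of_gt hα), sub_zero]
  rw [intervalIntegral.integral_congr hcongr, intervalIntegral.integral_div,
    outer_eval α hα, sub_self, Real.zero_rpow (by positivity : α + 1 ≠ 0), sub_zero, div_div]

private lemma lam_mono (α : ℝ) (hα : 0 < α) (c d a b : ℝ) (hcd : c < d) (hda : d ≤ a)
    (hab : a < b) :
    (a - c) ^ (α + 1) - (a - d) ^ (α + 1) < (b - c) ^ (α + 1) - (b - d) ^ (α + 1) := by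
  set g : ℝ → ℝ := fun x => (x - c) ^ (α + 1) - (x - d) ^ (α + 1) with hg
  have hd : ∀ x : ℝ, HasDerivAt g ((α + 1) * (x - c) ^ α - (α + 1) * (x - d) ^ α) x := by
    intro x
    have hid : HasDerivAt (fun y : ℝ => y - c) 1 x := (hasDerivAt_id x).sub_const c
    have hid2 : HasDerivAt (fun y : ℝ => y - d) 1 x := (hasDerivAt_id x).sub_const d
    have h1 : HasDerivAt (fun y : ℝ => (y - c) ^ (α + 1)) (1 * (α + 1) * (x - c) ^ (α + 1 - 1)) x :=
      hid.rpow_const (Or.inr (by linarith))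
    have h2 : HasDerivAt (fun y : ℝ => (y - d) ^ (α + 1)) (1 * (α + 1) * (x - d) ^ (α + 1 - 1)) x :=
      hid2.rpow_const (Or.inr (by linarith))
    have heq : α + 1 - 1 = α := by ring
    rw [heq] at h1 h2
    have h12 := h1.sub h2
    simp only [one_mul] at h12
    exact h12
  have hmono : StrictMonoOn g (Set.Icc a b) := by
    apply strictMonoOn_of_deriv_pos (convex_Icc a b)
    · exact fun x _ => (hd x).continuousAt.continuousWithinAt
    · intro x hx
      rw [interior_Icc] at hx
      rw [(hd x).deriv]
      have hxd : 0 ≤ x - d := by linarith [hx.1]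
      have hlt : (x - d) ^ α < (x - c) ^ α :=
        Real.rpow_lt_rpow hxd (by linarith) hα
      have := mul_lt_mul_of_pos_left hlt (by linarith : (0:ℝ) < α + 1)
      linarith
  exact hmono (Set.left_mem_Icc.mpr hab.le) (Set.right_mem_Icc.mpr hab.le) hab

/-- Properties of the product-integration weights
`w_{np} = (1/(kₙ kₚ)) ∫_{t_{n-1}}^{t_n} ∫_{t_{p-1}}^{min(t,t_p)} ω_α(t-θ) dθ dt`:
positivity, the closed formula for `p ≤ n-1`, and the exact value on the diagonal. -/
theorem stmt_3 (α : ℝ) (hα : 0 < α ∧ α < 1)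
    (t : ℕ → ℝ) (ht0 : t 0 = 0) (htmono : StrictMono t)
    (w lam : ℕ → ℕ → ℝ)
    (hw : ∀ n p, w n p = (1 / ((t n - t (n - 1)) * (t p - t (p - 1)))) *
      ∫ s in (t (n - 1))..(t n),
        ∫ θ in (t (p - 1))..(min s (t p)), (s - θ) ^ (α - 1) / Real.Gamma α)
    (hlam : ∀ n p, lam n p = (t n - t (p - 1)) ^ (α + 1) - (t n - t p) ^ (α + 1)) :
    (∀ n p, 1 ≤ p → p ≤ n → 0 < w n p) ∧
    (∀ n p, 1 ≤ p → p ≤ n - 1 → w n p =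
      (lam n p - lam (n - 1) p) /
        ((t n - t (n - 1)) * (t p - t (p - 1)) * Real.Gamma (α + 2))) ∧
    (∀ n, 1 ≤ n → w n n = (t n - t (n - 1)) ^ (α - 1) / Real.Gamma (α + 2)) := by
  obtain ⟨hα0, hα1⟩ := hα
  have hG : Real.Gamma (α + 2) = (α + 1) * (α * Real.Gamma α) := by
    have h1 : α + 2 = (α + 1) + 1 := by ring
    rw [h1, Real.Gamma_add_one (by linarith), Real.Gamma_add_one (ne_of_gt hα0)]
  have hGpos : 0 < Real.Gamma (α + 2) := Real.Gamma_pos_of_pos (by linarith)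
  -- diagonal formula
  have hdiag : ∀ n, 1 ≤ n → w n n = (t n - t (n - 1)) ^ (α - 1) / Real.Gamma (α + 2) := by
    intro n hn
    have hlt : t (n - 1) < t n := htmono (by omega)
    set k := t n - t (n - 1) with hk
    have hkpos : 0 < k := sub_pos.mpr hlt
    rw [hw n n, key_diag α hα0 _ _ hlt.le, hG]
    have hkk : k * k = k ^ (2 : ℝ) := by
      rw [show (2 : ℝ) = ((2 : ℕ) : ℝ) by norm_num, Real.rpow_natCast]
      ring
    have hsplit : k ^ (α + 1) = k ^ (α - 1) * k ^ (2 : ℝ) := by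
      rw [← Real.rpow_add hkpos]
      congr 1
      ring
    have hD : (0 : ℝ) < (α + 1) * (α * Real.Gamma α) := by rw [← hG]; exact hGpos
    rw [hsplit, ← hkk]
    field_simp
    rw [← hk]
    field_simp
  -- off-diagonal formula
  have hoff : ∀ n p, 1 ≤ p → p ≤ n - 1 → w n p =
      (lam n p - lam (n - 1) p) /
        ((t n - t (n - 1)) * (t p - t (p - 1)) * Real.Gamma (α + 2)) := by
    intro n p hp hpn
    have hn2 : 2 ≤ n := by omega
    have h1 : t (p - 1) < t p := htmono (by omega)
    have h2 : t p ≤ t (n - 1) := htmono.monotone (by omega)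
    have h3 : t (n - 1) < t n := htmono (by omega)
    rw [hw n p, key_off α hα0 _ _ _ _ h2 h3.le, hlam, hlam, hG]
    have hkn : t n - t (n - 1) ≠ 0 := ne_of_gt (sub_pos.mpr h3)
    have hkp : t p - t (p - 1) ≠ 0 := ne_of_gt (sub_pos.mpr h1)
    have hD : (0 : ℝ) < (α + 1) * (α * Real.Gamma α) := by rw [← hG]; exact hGpos
    field_simp
  refine ⟨?_, hoff, hdiag⟩
  intro n p hp hpn
  rcases eq_or_lt_of_le hpn with rfl | hlt
  · rw [hdiag p hp]
    have hlt : t (p - 1) < t p := htmono (by omega)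
    exact div_pos (Real.rpow_pos_of_pos (sub_pos.mpr hlt) _) hGpos
  · have hpn1 : p ≤ n - 1 := by omega
    rw [hoff n p hp hpn1, hlam, hlam]
    have h1 : t (p - 1) < t p := htmono (by omega)
    have h2 : t p ≤ t (n - 1) := htmono.monotone (by omega)
    have h3 : t (n - 1) < t n := htmono (by omega)
    apply div_pos
    · exact sub_pos.mpr (lam_mono α hα0 (t (p - 1)) (t p) (t (n - 1)) (t n) h1 h2 h3)
    · exact mul_pos (mul_pos (sub_pos.mpr h3) (sub_pos.mpr h1)) hGpos
end

section
/- Let B be a self-adjoint positive semidefinite bounded operator on a real Hilbert space H, let k_1,…,k_N > 0, and let w_{np} > 0 be the product-integration weights of a nonnegative-definite kernel ω_α as in the paper. Then for any V^0,…,V^N ∈ H, setting I^{(α)}V^{n−1/2} = w_{n1} V^1 k_1 + Σ_{p=2}^n w_{np} V^{p−1/2} k_p with V^{p−1/2} = (V^p + V^{p−1})/2, one has k_1 (I^{(α)} B V^{1/2}, V^1) + Σ_{n=2}^N k_n (I^{(α)} B V^{n−1/2}, V^{n−1/2}) ≥ 0. -/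
open MeasureTheory intervalIntegral Real Finset

open Set
open scoped ENNReal

lemma stmt5_one_sub_cos_le_sq (z : ℝ) : 1 - Real.cos z ≤ z^2/2 := by
  have h1 : Real.sin (z/2)^2 ≤ (z/2)^2 := Real.sin_sq_le_sq
  have h2 : Real.sin (z/2)^2 = 1/2 - Real.cos (2*(z/2))/2 := Real.sin_sq_eq_half_sub _
  rw [show 2*(z/2) = z by ring] at h2
  nlinarith

lemma stmt5_integrable_kernel {β : ℝ} (hβ0 : 0 < β) (hβ2 : β < 2) (u : ℝ) :
    IntegrableOn (fun ξ => (1 - Real.cos (u*ξ)) * ξ ^ (-1-β)) (Set.Ioi (0:ℝ)) := by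
  have hmeas : ∀ s : Set ℝ, AEStronglyMeasurable (fun ξ : ℝ => (1 - Real.cos (u*ξ)) * ξ ^ (-1-β))
      (volume.restrict s) := fun s => (Measurable.aestronglyMeasurable
    ((measurable_const.sub (Real.continuous_cos.measurable.comp
      (measurable_const_mul u))).mul (measurable_id.pow_const _)))
  have h1 : IntegrableOn (fun ξ => (1 - Real.cos (u*ξ)) * ξ ^ (-1-β)) (Set.Ioc (0:ℝ) 1) := by
    have hg : IntegrableOn (fun ξ : ℝ => u^2/2 * ξ ^ (1-β)) (Set.Ioc (0:ℝ) 1) := by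
      have := intervalIntegral.intervalIntegrable_rpow' (a := 0) (b := 1)
        (by linarith : (-1:ℝ) < 1 - β)
      rw [intervalIntegrable_iff_integrableOn_Ioc_of_le (by norm_num)] at this
      exact this.const_mul _
    refine Integrable.mono' hg (hmeas _) ?_
    rw [ae_restrict_iff' measurableSet_Ioc]
    filter_upwards with ξ hξ
    obtain ⟨hξ0, hξ1⟩ := hξ
    have hw : (0:ℝ) ≤ ξ ^ (-1-β) := Real.rpow_nonneg hξ0.le _
    have hcos : (0:ℝ) ≤ 1 - Real.cos (u*ξ) := by
      have := Real.cos_le_one (u*ξ); linarith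
    rw [Real.norm_eq_abs, abs_of_nonneg (mul_nonneg hcos hw)]
    have hb : 1 - Real.cos (u*ξ) ≤ (u*ξ)^2/2 := stmt5_one_sub_cos_le_sq _
    have h2 : ξ^(2:ℕ) * ξ ^ (-1-β) = ξ ^ (1-β) := by
      rw [← Real.rpow_natCast ξ 2, ← Real.rpow_add hξ0]
      norm_num
      rw [show (2:ℝ) + (-1-β) = 1-β by ring]
    calc (1 - Real.cos (u*ξ)) * ξ ^ (-1-β) ≤ (u*ξ)^2/2 * ξ ^ (-1-β) :=
          mul_le_mul_of_nonneg_right hb hw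
      _ = u^2/2 * (ξ^(2:ℕ) * ξ ^ (-1-β)) := by push_cast; ring
      _ = u^2/2 * ξ ^ (1-β) := by rw [h2]
  have h2 : IntegrableOn (fun ξ => (1 - Real.cos (u*ξ)) * ξ ^ (-1-β)) (Set.Ioi (1:ℝ)) := by
    have hg : IntegrableOn (fun ξ : ℝ => 2 * ξ ^ (-1-β)) (Set.Ioi (1:ℝ)) :=
      (integrableOn_Ioi_rpow_of_lt (by linarith) one_pos).const_mul 2
    refine Integrable.mono' hg (hmeas _) ?_
    rw [ae_restrict_iff' measurableSet_Ioi]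
    filter_upwards with ξ hξ
    have hξ0 : (0:ℝ) < ξ := lt_trans one_pos hξ
    have hw : (0:ℝ) ≤ ξ ^ (-1-β) := Real.rpow_nonneg hξ0.le _
    have hcos : (0:ℝ) ≤ 1 - Real.cos (u*ξ) := by
      have := Real.cos_le_one (u*ξ); linarith
    rw [Real.norm_eq_abs, abs_of_nonneg (mul_nonneg hcos hw)]
    have : 1 - Real.cos (u*ξ) ≤ 2 := by
      have := Real.neg_one_le_cos (u*ξ); linarith
    exact mul_le_mul_of_nonneg_right this hw
  exact (h1.union h2).mono_set (fun x hx => by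
    rcases le_or_gt x 1 with h | h
    · exact Or.inl ⟨hx, h⟩
    · exact Or.inr h)


lemma stmt5_kernel_eval {β : ℝ} (hβ0 : 0 < β) (u : ℝ) :
    ∫ ξ in Set.Ioi (0:ℝ), (1 - Real.cos (u*ξ)) * ξ ^ (-1-β)
      = |u| ^ β * ∫ ξ in Set.Ioi (0:ℝ), (1 - Real.cos ξ) * ξ ^ (-1-β) := by
  rcases eq_or_ne u 0 with rfl | hu
  · simp [Real.zero_rpow hβ0.ne']
  · set a := |u| with ha'
    have ha : 0 < a := abs_pos.mpr hu
    have step1 : ∫ ξ in Set.Ioi (0:ℝ), (1 - Real.cos (u*ξ)) * ξ ^ (-1-β)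
        = ∫ ξ in Set.Ioi (0:ℝ), a ^ (1+β) * ((1 - Real.cos (a*ξ)) * (a*ξ) ^ (-1-β)) := by
      apply setIntegral_congr_fun measurableSet_Ioi
      intro ξ hξ
      have hξ0 : (0:ℝ) < ξ := hξ
      have hcos : Real.cos (a*ξ) = Real.cos (u*ξ) := by
        rw [ha', show |u| * ξ = |u * ξ| by rw [abs_mul, abs_of_pos hξ0], Real.cos_abs]
      show (1 - Real.cos (u*ξ)) * ξ ^ (-1-β) = a ^ (1+β) * ((1 - Real.cos (a*ξ)) * (a*ξ) ^ (-1-β))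
      rw [hcos, Real.mul_rpow ha.le hξ0.le]
      rw [show a ^ (1+β) * ((1 - Real.cos (u*ξ)) * (a ^ (-1-β) * ξ ^ (-1-β)))
        = (a ^ (1+β) * a ^ (-1-β)) * ((1 - Real.cos (u*ξ)) * ξ ^ (-1-β)) by ring]
      rw [← Real.rpow_add ha, show (1+β) + (-1-β) = 0 by ring, Real.rpow_zero, one_mul]
    rw [step1, MeasureTheory.integral_const_mul]
    rw [integral_comp_mul_left_Ioi (fun z => (1 - Real.cos z) * z ^ (-1-β)) 0 ha]
    rw [mul_zero, smul_eq_mul]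
    rw [show a ^ (1+β) * (a⁻¹ * ∫ ξ in Set.Ioi (0:ℝ), (1 - Real.cos ξ) * ξ ^ (-1-β))
      = (a ^ (1+β) * a⁻¹) * ∫ ξ in Set.Ioi (0:ℝ), (1 - Real.cos ξ) * ξ ^ (-1-β) by ring]
    congr 1
    rw [← Real.rpow_neg_one a, ← Real.rpow_add ha, show 1 + β + -1 = β by ring]

lemma stmt5_c0_pos {β : ℝ} (hβ0 : 0 < β) (hβ2 : β < 2) :
    0 < ∫ ξ in Set.Ioi (0:ℝ), (1 - Real.cos ξ) * ξ ^ (-1-β) := by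
  have hint : IntegrableOn (fun ξ : ℝ => (1 - Real.cos ξ) * ξ ^ (-1-β)) (Set.Ioi (0:ℝ)) := by
    have := stmt5_integrable_kernel hβ0 hβ2 1
    simpa using this
  have hnn : (fun _ : ℝ => (0:ℝ)) ≤ᵐ[volume.restrict (Set.Ioi (0:ℝ))]
      fun ξ => (1 - Real.cos ξ) * ξ ^ (-1-β) := by
    filter_upwards [ae_restrict_mem measurableSet_Ioi] with ξ hξ
    have := Real.cos_le_one ξ
    exact mul_nonneg (by linarith) (Real.rpow_nonneg (le_of_lt hξ) _)
  rw [setIntegral_pos_iff_support_of_nonneg_ae hnn hint]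
  have hsub : Set.Ioc (1:ℝ) 3 ⊆ (Function.support fun ξ => (1 - Real.cos ξ) * ξ ^ (-1-β)) ∩ Set.Ioi 0 := by
    intro ξ hξ
    obtain ⟨h1, h3⟩ := hξ
    have hξ0 : (0:ℝ) < ξ := lt_trans one_pos h1
    have hπ : ξ ≤ π := le_trans h3 (by linarith [Real.pi_gt_three])
    have hc1 : Real.cos ξ ≤ Real.cos 1 :=
      Real.cos_le_cos_of_nonneg_of_le_pi (by norm_num) hπ h1.le
    have hc0 : Real.cos 1 < Real.cos 0 :=
      Real.cos_lt_cos_of_nonneg_of_le_pi (le_refl 0) (by linarith [Real.pi_gt_three]) one_pos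
    rw [Real.cos_zero] at hc0
    refine ⟨ne_of_gt (mul_pos (by linarith) (Real.rpow_pos_of_pos hξ0 _)), hξ0⟩
  calc (0:ℝ≥0∞) < volume (Set.Ioc (1:ℝ) 3) := by rw [Real.volume_Ioc]; norm_num
    _ ≤ _ := measure_mono hsub


lemma stmt5_negdef {β : ℝ} (hβ0 : 0 < β) (hβ2 : β < 2) (M : ℕ) (u y : ℕ → ℝ)
    (hy : ∑ i ∈ Finset.range M, y i = 0) :
    ∑ i ∈ Finset.range M, ∑ j ∈ Finset.range M, y i * y j * |u i - u j| ^ β ≤ 0 := by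
  set c0 := ∫ ξ in Set.Ioi (0:ℝ), (1 - Real.cos ξ) * ξ ^ (-1-β) with hc0def
  have hc0 : 0 < c0 := stmt5_c0_pos hβ0 hβ2
  have key : (∫ ξ in Set.Ioi (0:ℝ), ∑ i ∈ Finset.range M, ∑ j ∈ Finset.range M,
        y i * y j * ((1 - Real.cos ((u i - u j)*ξ)) * ξ ^ (-1-β)))
      = c0 * ∑ i ∈ Finset.range M, ∑ j ∈ Finset.range M, y i * y j * |u i - u j| ^ β := by
    rw [integral_finset_sum _ (fun i _ => integrable_finset_sum _
      (fun j _ => ((stmt5_integrable_kernel hβ0 hβ2 (u i - u j)).const_mul _)))]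
    rw [Finset.mul_sum]
    refine Finset.sum_congr rfl (fun i _ => ?_)
    rw [integral_finset_sum _ (fun j _ => ((stmt5_integrable_kernel hβ0 hβ2 (u i - u j)).const_mul _))]
    rw [Finset.mul_sum]
    refine Finset.sum_congr rfl (fun j _ => ?_)
    rw [MeasureTheory.integral_const_mul, stmt5_kernel_eval hβ0]
    ring
  have hF : ∀ ξ : ℝ, ξ ∈ Set.Ioi (0:ℝ) → (∑ i ∈ Finset.range M, ∑ j ∈ Finset.range M,
      y i * y j * ((1 - Real.cos ((u i - u j)*ξ)) * ξ ^ (-1-β))) ≤ 0 := by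
    intro ξ hξ
    have hw : (0:ℝ) ≤ ξ ^ (-1-β) := Real.rpow_nonneg (le_of_lt hξ) _
    have hinner : (∑ i ∈ Finset.range M, ∑ j ∈ Finset.range M,
        y i * y j * (1 - Real.cos ((u i - u j)*ξ)))
        = (∑ i ∈ Finset.range M, y i) * (∑ j ∈ Finset.range M, y j)
          - (∑ i ∈ Finset.range M, y i * Real.cos (u i * ξ)) * (∑ j ∈ Finset.range M, y j * Real.cos (u j * ξ))
          - (∑ i ∈ Finset.range M, y i * Real.sin (u i * ξ)) * (∑ j ∈ Finset.range M, y j * Real.sin (u j * ξ)) := by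
      rw [Finset.sum_mul_sum, Finset.sum_mul_sum, Finset.sum_mul_sum]
      rw [← Finset.sum_sub_distrib, ← Finset.sum_sub_distrib]
      refine Finset.sum_congr rfl (fun i _ => ?_)
      rw [← Finset.sum_sub_distrib, ← Finset.sum_sub_distrib]
      refine Finset.sum_congr rfl (fun j _ => ?_)
      rw [show (u i - u j) * ξ = u i * ξ - u j * ξ by ring, Real.cos_sub]
      ring
    have h2 : (∑ i ∈ Finset.range M, ∑ j ∈ Finset.range M,
        y i * y j * ((1 - Real.cos ((u i - u j)*ξ)) * ξ ^ (-1-β)))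
        = (∑ i ∈ Finset.range M, ∑ j ∈ Finset.range M,
        y i * y j * (1 - Real.cos ((u i - u j)*ξ))) * ξ ^ (-1-β) := by
      rw [Finset.sum_mul]
      refine Finset.sum_congr rfl (fun i _ => ?_)
      rw [Finset.sum_mul]
      exact Finset.sum_congr rfl (fun j _ => by ring)
    rw [h2, hinner, hy]
    have hsq : (0:ℝ) ≤ (∑ i ∈ Finset.range M, y i * Real.cos (u i * ξ)) ^ 2
        + (∑ i ∈ Finset.range M, y i * Real.sin (u i * ξ)) ^ 2 :=
      add_nonneg (sq_nonneg _) (sq_nonneg _)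
    nlinarith [hsq, hw, mul_nonneg hsq hw]
  have hint : (∫ ξ in Set.Ioi (0:ℝ), ∑ i ∈ Finset.range M, ∑ j ∈ Finset.range M,
        y i * y j * ((1 - Real.cos ((u i - u j)*ξ)) * ξ ^ (-1-β))) ≤ 0 := by
    apply setIntegral_nonpos measurableSet_Ioi
    exact hF
  rw [key] at hint
  exact nonpos_of_mul_nonpos_right hint hc0


lemma stmt5_L1 {α : ℝ} (hα0 : 0 < α) (s c d : ℝ) :
    (∫ θ in c..d, (s - θ) ^ (α-1) / Real.Gamma α) =
      ((s-c)^α - (s-d)^α) / (Real.Gamma α * α) := by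
  rw [intervalIntegral.integral_div]
  rw [intervalIntegral.integral_comp_sub_left (fun u => u ^ (α-1)) s]
  rw [integral_rpow (Or.inl (by linarith : (-1:ℝ) < α - 1))]
  rw [sub_add_cancel, div_div, mul_comm]

lemma stmt5_L2 {α : ℝ} (hα0 : 0 < α) (a b c : ℝ) :
    (∫ s in a..b, (s - c) ^ α) = ((b-c)^(α+1) - (a-c)^(α+1))/(α+1) := by
  rw [intervalIntegral.integral_comp_sub_right (fun u => u ^ α) c]
  rw [integral_rpow (Or.inl (by linarith : (-1:ℝ) < α))]

lemma stmt5_contsub {α : ℝ} (hα0 : 0 < α) (c : ℝ) : Continuous (fun s : ℝ => (s - c) ^ α) := by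
  have : Continuous (fun u : ℝ => u ^ α) := by
    rw [continuous_iff_continuousAt]
    intro x
    exact Real.continuousAt_rpow_const x α (Or.inr hα0.le)
  exact this.comp (continuous_id.sub continuous_const)

-- closed form for off-diagonal weights
lemma stmt5_K1 {α : ℝ} (hα0 : 0 < α) (t : ℕ → ℝ) (hmono : StrictMono t)
    (n p : ℕ) (hp : 1 ≤ p) (hpn : p < n) :
    (∫ s in (t (n-1))..(t n), ∫ θ in (t (p-1))..(min s (t p)), (s - θ) ^ (α-1) / Real.Gamma α)
      = (|t n - t (p-1)|^(α+1) - |t (n-1) - t (p-1)|^(α+1)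
         - |t n - t p|^(α+1) + |t (n-1) - t p|^(α+1)) / (Real.Gamma α * α * (α+1)) := by
  have hΓ : 0 < Real.Gamma α := Real.Gamma_pos_of_pos hα0
  have hab : t (n-1) ≤ t n := (hmono (by omega : n-1 < n)).le
  have h1 : t p ≤ t (n-1) := hmono.monotone (by omega)
  have h2 : t (p-1) ≤ t p := (hmono (by omega : p-1 < p)).le
  have step1 : (∫ s in (t (n-1))..(t n), ∫ θ in (t (p-1))..(min s (t p)), (s - θ) ^ (α-1) / Real.Gamma α)
      = ∫ s in (t (n-1))..(t n), (((s - t (p-1))^α - (s - t p)^α) / (Real.Gamma α * α)) := by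
    apply intervalIntegral.integral_congr
    intro s hs
    rw [Set.uIcc_of_le hab] at hs
    have hmin : min s (t p) = t p := min_eq_right (le_trans h1 hs.1)
    show (∫ θ in (t (p-1))..(min s (t p)), (s - θ) ^ (α-1) / Real.Gamma α)
      = ((s - t (p-1))^α - (s - t p)^α) / (Real.Gamma α * α)
    rw [hmin, stmt5_L1 hα0]
  rw [step1]
  have hint1 : IntervalIntegrable (fun s : ℝ => (s - t (p-1))^α) volume (t (n-1)) (t n) :=
    (stmt5_contsub hα0 _).intervalIntegrable _ _
  have hint2 : IntervalIntegrable (fun s : ℝ => (s - t p)^α) volume (t (n-1)) (t n) :=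
    (stmt5_contsub hα0 _).intervalIntegrable _ _
  rw [intervalIntegral.integral_div, intervalIntegral.integral_sub hint1 hint2,
    stmt5_L2 hα0, stmt5_L2 hα0]
  rw [abs_of_nonneg (by linarith : (0:ℝ) ≤ t n - t (p-1)),
    abs_of_nonneg (by linarith : (0:ℝ) ≤ t (n-1) - t (p-1)),
    abs_of_nonneg (by linarith : (0:ℝ) ≤ t n - t p),
    abs_of_nonneg (by linarith : (0:ℝ) ≤ t (n-1) - t p)]
  field_simp
  ring

-- closed form for diagonal weights
lemma stmt5_K2 {α : ℝ} (hα0 : 0 < α) (t : ℕ → ℝ) (hmono : StrictMono t)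
    (n : ℕ) (hn : 1 ≤ n) :
    (∫ s in (t (n-1))..(t n), ∫ θ in (t (n-1))..(min s (t n)), (s - θ) ^ (α-1) / Real.Gamma α)
      = |t n - t (n-1)|^(α+1) / (Real.Gamma α * α * (α+1)) := by
  have hΓ : 0 < Real.Gamma α := Real.Gamma_pos_of_pos hα0
  have hab : t (n-1) ≤ t n := (hmono (by omega : n-1 < n)).le
  have step1 : (∫ s in (t (n-1))..(t n), ∫ θ in (t (n-1))..(min s (t n)), (s - θ) ^ (α-1) / Real.Gamma α)
      = ∫ s in (t (n-1))..(t n), ((s - t (n-1))^α / (Real.Gamma α * α)) := by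
    apply intervalIntegral.integral_congr
    intro s hs
    rw [Set.uIcc_of_le hab] at hs
    have hmin : min s (t n) = s := min_eq_left hs.2
    show (∫ θ in (t (n-1))..(min s (t n)), (s - θ) ^ (α-1) / Real.Gamma α)
      = (s - t (n-1))^α / (Real.Gamma α * α)
    rw [hmin, stmt5_L1 hα0, sub_self, Real.zero_rpow hα0.ne', sub_zero]
  rw [step1, intervalIntegral.integral_div, stmt5_L2 hα0, sub_self,
    Real.zero_rpow (by linarith : α + 1 ≠ 0),
    abs_of_nonneg (by linarith : (0:ℝ) ≤ t n - t (n-1))]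
  rw [sub_zero, div_div]
  ring


lemma stmt5_shift_sum {M : ℕ} (f g : ℕ → ℝ) (h0 : f 0 = 0) (hM : f M = 0) :
    ∑ p ∈ Finset.range M, f p * g (p-1) = ∑ p ∈ Finset.range M, f (p+1) * g p := by
  cases M with
  | zero => simp
  | succ m =>
    rw [Finset.sum_range_succ', Finset.sum_range_succ]
    simp only [h0, hM, zero_mul, mul_zero, add_zero, Nat.add_sub_cancel]

lemma stmt5_Kpos {α : ℝ} (hα0 : 0 < α) (hα1 : α < 1) (N : ℕ) (t : ℕ → ℝ)
    (hmono : StrictMono t) (x : ℕ → ℝ) :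
    0 ≤ ∑ n ∈ Finset.Icc 1 N, ∑ p ∈ Finset.Icc 1 n,
      (∫ s in (t (n-1))..(t n), ∫ θ in (t (p-1))..(min s (t p)),
        (s - θ) ^ (α-1) / Real.Gamma α) * (x p * x n) := by
  have hΓ : 0 < Real.Gamma α := Real.Gamma_pos_of_pos hα0
  have hcne : Real.Gamma α * α * (α+1) ≠ 0 := by positivity
  have hc : (0:ℝ) < Real.Gamma α * α * (α+1) := by positivity
  set Φ : ℕ → ℕ → ℝ := fun i j => |t i - t j| ^ (α+1) with hΦ
  have hΦsymm : ∀ i j, Φ i j = Φ j i := by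
    intro i j; simp only [hΦ, abs_sub_comm]
  have hΦdiag : ∀ i, Φ i i = 0 := by
    intro i; simp only [hΦ, sub_self, abs_zero]
    exact Real.zero_rpow (by linarith)
  set J : ℕ → ℕ → ℝ := fun n p => Φ n (p-1) + Φ (n-1) p - Φ (n-1) (p-1) - Φ n p with hJ
  have hJsymm : ∀ n p, J n p = J p n := by
    intro n p; simp only [hJ]
    rw [hΦsymm n (p-1), hΦsymm (n-1) p, hΦsymm (n-1) (p-1), hΦsymm n p]; ring
  set xb : ℕ → ℝ := fun i => if i ∈ Finset.Icc 1 N then x i else 0 with hxb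
  set y : ℕ → ℝ := fun i => xb (i+1) - xb i with hy
  have hxb0 : xb 0 = 0 := by simp [hxb]
  have hxbof : ∀ m, N < m → xb m = 0 := by
    intro m hm; simp only [hxb, Finset.mem_Icc, if_neg (by omega : ¬ (1 ≤ m ∧ m ≤ N))]
  set G : ℕ → ℕ → ℝ := fun n p => x n * x p * J n p with hG
  set S := Finset.Icc 1 N with hS
  -- step H1
  have H1 : ∀ n ∈ S,
      (2*(Real.Gamma α * α * (α+1))) * ∑ p ∈ Finset.Icc 1 n, (∫ s in (t (n-1))..(t n),
          ∫ θ in (t (p-1))..(min s (t p)), (s - θ) ^ (α-1) / Real.Gamma α) * (x p * x n)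
        = (∑ p ∈ Finset.Icc 1 (n-1), (G n p + G p n)) + G n n := by
    intro n hn
    rw [hS, Finset.mem_Icc] at hn
    have hsplit : Finset.Icc 1 n = insert n (Finset.Icc 1 (n-1)) := by
      ext a; simp only [Finset.mem_Icc, Finset.mem_insert]; omega
    rw [hsplit, Finset.sum_insert (by simp only [Finset.mem_Icc]; omega)]
    rw [stmt5_K2 hα0 t hmono n hn.1]
    rw [mul_add, Finset.mul_sum]
    have hdiag : 2*(Real.Gamma α * α * (α+1)) * (|t n - t (n-1)|^(α+1) / (Real.Gamma α * α * (α+1)) * (x n * x n)) = G n n := by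
      have hJnn : J n n = 2 * |t n - t (n-1)|^(α+1) := by
        simp only [hJ]
        rw [hΦsymm (n-1) n, hΦdiag, hΦdiag]
        simp only [hΦ]; ring
      simp only [hG, hJnn]
      field_simp
    have hoff : ∀ p ∈ Finset.Icc 1 (n-1),
        2*(Real.Gamma α * α * (α+1)) * ((∫ s in (t (n-1))..(t n), ∫ θ in (t (p-1))..(min s (t p)),
          (s - θ) ^ (α-1) / Real.Gamma α) * (x p * x n)) = G n p + G p n := by
      intro p hp
      rw [Finset.mem_Icc] at hp
      rw [stmt5_K1 hα0 t hmono n p hp.1 (by omega)]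
      have e1 : G n p + G p n = 2 * (x p * x n) * J n p := by
        simp only [hG]; rw [hJsymm p n]; ring
      rw [e1]
      simp only [hJ, hΦ]
      field_simp; ring
    rw [Finset.sum_congr rfl hoff, hdiag]
    ring
  -- step H2
  have filt : ∀ n ∈ S, S.filter (· < n) = Finset.Icc 1 (n-1) := by
    intro n hn
    rw [hS, Finset.mem_Icc] at hn
    ext a; simp only [hS, Finset.mem_filter, Finset.mem_Icc]; omega
  have H2 : ∑ n ∈ S, ((∑ p ∈ Finset.Icc 1 (n-1), (G n p + G p n)) + G n n)
      = ∑ n ∈ S, ∑ p ∈ S, G n p := by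
    have tri : ∀ n p : ℕ, G n p
        = (if p < n then G n p else 0) + (if p = n then G n p else 0)
          + (if n < p then G n p else 0) := by
      intro n p
      rcases lt_trichotomy p n with h|h|h
      · rw [if_pos h, if_neg (by omega), if_neg (by omega)]; ring
      · rw [if_neg (by omega), if_pos h, if_neg (by omega)]; subst h; ring
      · rw [if_neg (by omega), if_neg (by omega), if_pos h]; ring
    have e1 : ∀ (F : ℕ → ℕ → ℝ), ∑ n ∈ S, ∑ p ∈ S, (if p < n then F n p else 0)
        = ∑ n ∈ S, ∑ p ∈ Finset.Icc 1 (n-1), F n p := by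
      intro F
      refine Finset.sum_congr rfl (fun n hn => ?_)
      rw [← filt n hn, Finset.sum_filter]
    have e2 : ∑ n ∈ S, ∑ p ∈ S, (if p = n then G n p else 0) = ∑ n ∈ S, G n n := by
      refine Finset.sum_congr rfl (fun n hn => ?_)
      rw [Finset.sum_ite_eq' S n (G n), if_pos hn]
    have e3 : ∑ n ∈ S, ∑ p ∈ S, (if n < p then G n p else 0)
        = ∑ n ∈ S, ∑ p ∈ S, (if p < n then G p n else 0) := by
      rw [Finset.sum_comm]
    have expand : ∑ n ∈ S, ∑ p ∈ S, G n p
        = ∑ n ∈ S, ∑ p ∈ S, ((if p < n then G n p else 0) + (if p = n then G n p else 0)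
            + (if n < p then G n p else 0)) :=
      Finset.sum_congr rfl (fun n _ => Finset.sum_congr rfl (fun p _ => tri n p))
    have distr : ∑ n ∈ S, ∑ p ∈ S, ((if p < n then G n p else 0) + (if p = n then G n p else 0)
            + (if n < p then G n p else 0))
        = (∑ n ∈ S, ∑ p ∈ S, (if p < n then G n p else 0))
          + (∑ n ∈ S, ∑ p ∈ S, (if p = n then G n p else 0))
          + (∑ n ∈ S, ∑ p ∈ S, (if n < p then G n p else 0)) := by
      rw [← Finset.sum_add_distrib, ← Finset.sum_add_distrib]
      exact Finset.sum_congr rfl (fun n _ => by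
        rw [← Finset.sum_add_distrib, ← Finset.sum_add_distrib])
    have distr2 : ∑ n ∈ S, ((∑ p ∈ Finset.Icc 1 (n-1), (G n p + G p n)) + G n n)
        = (∑ n ∈ S, ∑ p ∈ Finset.Icc 1 (n-1), G n p)
          + (∑ n ∈ S, ∑ p ∈ Finset.Icc 1 (n-1), G p n) + ∑ n ∈ S, G n n := by
      rw [Finset.sum_add_distrib]
      congr 1
      rw [← Finset.sum_add_distrib]
      exact Finset.sum_congr rfl (fun n _ => Finset.sum_add_distrib)
    rw [expand, distr, e2, e3, e1 (fun n p => G n p), e1 (fun n p => G p n), distr2]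
    ring
  -- step H3
  have hsub : S ⊆ Finset.range (N+2) := by
    intro a ha; rw [hS, Finset.mem_Icc] at ha; rw [Finset.mem_range]; omega
  have H3 : ∑ n ∈ S, ∑ p ∈ S, G n p
      = ∑ n ∈ Finset.range (N+2), ∑ p ∈ Finset.range (N+2), xb n * xb p * J n p := by
    have inner_ext : ∀ n, ∑ p ∈ S, xb n * xb p * J n p
        = ∑ p ∈ Finset.range (N+2), xb n * xb p * J n p := by
      intro n
      refine Finset.sum_subset hsub (fun p _ hp => ?_)
      have : xb p = 0 := by rw [hxb]; exact if_neg hp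
      rw [this]; ring
    calc ∑ n ∈ S, ∑ p ∈ S, G n p
        = ∑ n ∈ S, ∑ p ∈ S, xb n * xb p * J n p := by
          refine Finset.sum_congr rfl (fun n hn => Finset.sum_congr rfl (fun p hp => ?_))
          simp only [hG, hxb, if_pos hn, if_pos hp]
      _ = ∑ n ∈ S, ∑ p ∈ Finset.range (N+2), xb n * xb p * J n p :=
          Finset.sum_congr rfl (fun n _ => inner_ext n)
      _ = ∑ n ∈ Finset.range (N+2), ∑ p ∈ Finset.range (N+2), xb n * xb p * J n p := by
          refine Finset.sum_subset hsub (fun n _ hn => Finset.sum_eq_zero (fun p _ => ?_))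
          have : xb n = 0 := by rw [hxb]; exact if_neg hn
          rw [this]; ring
  -- step H4
  have hxbM : xb (N+2) = 0 := hxbof _ (by omega)
  have Dstep : ∀ m, ∑ p ∈ Finset.range (N+2), xb p * (Φ m (p-1) - Φ m p)
      = ∑ p ∈ Finset.range (N+2), y p * Φ m p := by
    intro m
    have h1 : ∑ p ∈ Finset.range (N+2), xb p * Φ m (p-1)
        = ∑ p ∈ Finset.range (N+2), xb (p+1) * Φ m p :=
      stmt5_shift_sum xb (fun p => Φ m p) hxb0 hxbM
    calc ∑ p ∈ Finset.range (N+2), xb p * (Φ m (p-1) - Φ m p)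
        = ∑ p ∈ Finset.range (N+2), (xb p * Φ m (p-1) - xb p * Φ m p) :=
          Finset.sum_congr rfl (fun p _ => by ring)
      _ = (∑ p ∈ Finset.range (N+2), xb p * Φ m (p-1)) - ∑ p ∈ Finset.range (N+2), xb p * Φ m p :=
          Finset.sum_sub_distrib _ _
      _ = (∑ p ∈ Finset.range (N+2), xb (p+1) * Φ m p) - ∑ p ∈ Finset.range (N+2), xb p * Φ m p := by
          rw [h1]
      _ = ∑ p ∈ Finset.range (N+2), y p * Φ m p := by
          rw [← Finset.sum_sub_distrib]
          exact Finset.sum_congr rfl (fun p _ => by simp only [hy]; ring)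
  have H4 : ∑ n ∈ Finset.range (N+2), ∑ p ∈ Finset.range (N+2), xb n * xb p * J n p
      = - ∑ n ∈ Finset.range (N+2), ∑ p ∈ Finset.range (N+2), y n * y p * Φ n p := by
    have inner_eq : ∀ n, ∑ p ∈ Finset.range (N+2), xb n * xb p * J n p
        = xb n * ((∑ p ∈ Finset.range (N+2), y p * Φ n p)
            - ∑ p ∈ Finset.range (N+2), y p * Φ (n-1) p) := by
      intro n
      have : ∀ p, xb n * xb p * J n p
          = xb n * (xb p * (Φ n (p-1) - Φ n p) - xb p * (Φ (n-1) (p-1) - Φ (n-1) p)) := by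
        intro p; simp only [hJ]; ring
      rw [Finset.sum_congr rfl (fun p _ => this p), ← Finset.mul_sum, Finset.sum_sub_distrib,
        Dstep n, Dstep (n-1)]
    rw [Finset.sum_congr rfl (fun n _ => inner_eq n)]
    set E : ℕ → ℝ := fun m => ∑ p ∈ Finset.range (N+2), y p * Φ m p with hE
    have h2 : ∑ n ∈ Finset.range (N+2), xb n * E (n-1)
        = ∑ n ∈ Finset.range (N+2), xb (n+1) * E n :=
      stmt5_shift_sum xb E hxb0 hxbM
    calc ∑ n ∈ Finset.range (N+2), xb n * (E n - E (n-1))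
        = (∑ n ∈ Finset.range (N+2), xb n * E n) - ∑ n ∈ Finset.range (N+2), xb n * E (n-1) := by
          rw [← Finset.sum_sub_distrib]
          exact Finset.sum_congr rfl (fun n _ => by ring)
      _ = (∑ n ∈ Finset.range (N+2), xb n * E n) - ∑ n ∈ Finset.range (N+2), xb (n+1) * E n := by
          rw [h2]
      _ = - ∑ n ∈ Finset.range (N+2), y n * E n := by
          rw [← Finset.sum_sub_distrib, ← Finset.sum_neg_distrib]
          exact Finset.sum_congr rfl (fun n _ => by simp only [hy]; ring)
      _ = - ∑ n ∈ Finset.range (N+2), ∑ p ∈ Finset.range (N+2), y n * y p * Φ n p := by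
          congr 1
          refine Finset.sum_congr rfl (fun n _ => ?_)
          simp only [hE]
          rw [Finset.mul_sum]
          exact Finset.sum_congr rfl (fun p _ => by ring)
  -- conclusion
  have hQ : ∑ n ∈ Finset.range (N+2), ∑ p ∈ Finset.range (N+2), y n * y p * Φ n p ≤ 0 := by
    have hsum : ∑ i ∈ Finset.range (N+2), y i = 0 := by
      have := Finset.sum_range_sub xb (N+2)
      simp only [hy]
      rw [this, hxb0, hxbM, sub_zero]
    have := stmt5_negdef (by linarith : (0:ℝ) < α+1) (by linarith) (N+2) t y hsum
    simpa only [hΦ] using this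
  have key : (2*(Real.Gamma α * α * (α+1))) * ∑ n ∈ S, ∑ p ∈ Finset.Icc 1 n,
      (∫ s in (t (n-1))..(t n), ∫ θ in (t (p-1))..(min s (t p)),
        (s - θ) ^ (α-1) / Real.Gamma α) * (x p * x n)
      = - ∑ n ∈ Finset.range (N+2), ∑ p ∈ Finset.range (N+2), y n * y p * Φ n p := by
    rw [Finset.mul_sum, Finset.sum_congr rfl H1, H2, H3, H4]
  nlinarith [key, hQ, hc]


/-- Discrete positivity of the memory quadrature: with `B` self-adjoint
positive semidefinite and `w_{np}` the product-integration weights of `ω_α`,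
`k₁ (I^{(α)} B V^{1/2}, V¹) + Σ_{n=2}^N kₙ (I^{(α)} B V^{n-1/2}, V^{n-1/2}) ≥ 0`. -/
theorem stmt_5 {H : Type*} [NormedAddCommGroup H] [InnerProductSpace ℝ H]
    (α : ℝ) (hα : 0 < α ∧ α < 1) (N : ℕ) (hN : 1 ≤ N)
    (t : ℕ → ℝ) (ht0 : t 0 = 0) (hmono : StrictMono t)
    (w : ℕ → ℕ → ℝ)
    (hw : ∀ n p, w n p = (1 / ((t n - t (n - 1)) * (t p - t (p - 1)))) *
      ∫ s in (t (n - 1))..(t n),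
        ∫ θ in (t (p - 1))..(min s (t p)), (s - θ) ^ (α - 1) / Real.Gamma α)
    (B : H →L[ℝ] H)
    (hBsa : ∀ x y : H, (inner ℝ (B x) y : ℝ) = inner ℝ x (B y))
    (hBpos : ∀ x : H, (0:ℝ) ≤ inner ℝ (B x) x)
    (V W : ℕ → H) (hW1 : W 1 = V 1)
    (hWn : ∀ p, 2 ≤ p → W p = (2:ℝ)⁻¹ • (V p + V (p - 1))) :
    0 ≤ ∑ n ∈ Finset.Icc 1 N, (t n - t (n - 1)) *
      (inner ℝ (∑ p ∈ Finset.Icc 1 n, ((t p - t (p - 1)) * w n p) • B (W p)) (W n) : ℝ) := by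
  obtain ⟨hα0, hα1⟩ := hα
  have hk : ∀ m : ℕ, 1 ≤ m → (0:ℝ) < t m - t (m-1) :=
    fun m hm => sub_pos.mpr (hmono (by omega))
  -- Step 1: rewrite the goal as a double sum of weights times inner ℝ products
  have step1 : ∑ n ∈ Finset.Icc 1 N, (t n - t (n - 1)) *
        (inner ℝ (∑ p ∈ Finset.Icc 1 n, ((t p - t (p - 1)) * w n p) • B (W p)) (W n) : ℝ)
      = ∑ n ∈ Finset.Icc 1 N, ∑ p ∈ Finset.Icc 1 n,
        (∫ s in (t (n-1))..(t n), ∫ θ in (t (p-1))..(min s (t p)),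
          (s - θ) ^ (α-1) / Real.Gamma α) * (inner ℝ (B (W p)) (W n) : ℝ) := by
    refine Finset.sum_congr rfl (fun n hn => ?_)
    rw [Finset.mem_Icc] at hn
    rw [sum_inner, Finset.mul_sum]
    refine Finset.sum_congr rfl (fun p hp => ?_)
    rw [Finset.mem_Icc] at hp
    rw [real_inner_smul_left, hw n p]
    have hkn : t n - t (n-1) ≠ 0 := (hk n hn.1).ne'
    have hkp : t p - t (p-1) ≠ 0 := (hk p hp.1).ne'
    field_simp
  rw [step1]
  -- Step 2: Gram matrix decomposition
  set Gm : Matrix (Fin N) (Fin N) ℝ :=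
    Matrix.of (fun i j => (inner ℝ (B (W ((i:ℕ)+1))) (W ((j:ℕ)+1)) : ℝ)) with hGm
  have hGmPSD : Gm.PosSemidef := by
    rw [Matrix.posSemidef_iff_dotProduct_mulVec]
    constructor
    · ext i j
      simp only [Matrix.conjTranspose_apply, hGm, Matrix.of_apply, star_trivial]
      rw [hBsa]
      exact real_inner_comm _ _
    · intro v
      set u : H := ∑ j : Fin N, v j • W ((j:ℕ)+1) with hu
      have lhs_eq : dotProduct (star v) (Gm.mulVec v)
          = ∑ i : Fin N, ∑ j : Fin N, v i * ((inner ℝ (B (W ((i:ℕ)+1))) (W ((j:ℕ)+1)) : ℝ) * v j) := by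
        simp only [dotProduct, Matrix.mulVec, star_trivial, hGm, Matrix.of_apply,
          Finset.mul_sum]
      have rhs_eq : (inner ℝ (B u) u : ℝ)
          = ∑ i : Fin N, ∑ j : Fin N, v i * ((inner ℝ (B (W ((i:ℕ)+1))) (W ((j:ℕ)+1)) : ℝ) * v j) := by
        rw [hu, map_sum, sum_inner]
        refine Finset.sum_congr rfl (fun i _ => ?_)
        rw [B.map_smul, real_inner_smul_left, inner_sum, Finset.mul_sum]
        refine Finset.sum_congr rfl (fun j _ => ?_)
        rw [real_inner_smul_right]
        ring
      show 0 ≤ dotProduct (star v) (Gm.mulVec v)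
      rw [lhs_eq, ← rhs_eq]
      exact hBpos u
  obtain ⟨C, hC⟩ : ∃ C : Matrix (Fin N) (Fin N) ℝ, Gm = C.conjTranspose * C := by
    open scoped MatrixOrder in
    obtain ⟨C, hC⟩ := CStarAlgebra.nonneg_iff_eq_star_mul_self.mp hGmPSD.nonneg
    exact ⟨C, by rw [hC, Matrix.star_eq_conjTranspose]⟩
  have hGmE : ∀ i j, Gm i j = ∑ k : Fin N, C k i * C k j := by
    intro i j
    rw [hC, Matrix.mul_apply]
    exact Finset.sum_congr rfl (fun k _ => by
      rw [Matrix.conjTranspose_apply, star_trivial])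
  -- Step 3: scalar vectors
  set xk : Fin N → ℕ → ℝ := fun k m => if h : m - 1 < N ∧ 1 ≤ m then C k ⟨m-1, h.1⟩ else 0 with hxk
  have hb : ∀ n ∈ Finset.Icc 1 N, ∀ p ∈ Finset.Icc 1 n,
      (inner ℝ (B (W p)) (W n) : ℝ) = ∑ k : Fin N, xk k p * xk k n := by
    intro n hn p hp
    rw [Finset.mem_Icc] at hn hp
    have hpN : p - 1 < N ∧ 1 ≤ p := ⟨by omega, hp.1⟩
    have hnN : n - 1 < N ∧ 1 ≤ n := ⟨by omega, hn.1⟩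
    have e : Gm ⟨p-1, hpN.1⟩ ⟨n-1, hnN.1⟩ = (inner ℝ (B (W p)) (W n) : ℝ) := by
      simp only [hGm, Matrix.of_apply]
      rw [Nat.sub_add_cancel hp.1, Nat.sub_add_cancel hn.1]
    rw [← e, hGmE]
    refine Finset.sum_congr rfl (fun k _ => ?_)
    rw [hxk]
    simp only [dif_pos hpN, dif_pos hnN]
  -- Step 4: conclude via stmt5_Kpos
  have trans : ∑ n ∈ Finset.Icc 1 N, ∑ p ∈ Finset.Icc 1 n,
        (∫ s in (t (n-1))..(t n), ∫ θ in (t (p-1))..(min s (t p)),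
          (s - θ) ^ (α-1) / Real.Gamma α) * (inner ℝ (B (W p)) (W n) : ℝ)
      = ∑ k : Fin N, ∑ n ∈ Finset.Icc 1 N, ∑ p ∈ Finset.Icc 1 n,
        (∫ s in (t (n-1))..(t n), ∫ θ in (t (p-1))..(min s (t p)),
          (s - θ) ^ (α-1) / Real.Gamma α) * (xk k p * xk k n) := by
    rw [Finset.sum_comm]
    refine Finset.sum_congr rfl (fun n hn => ?_)
    rw [Finset.sum_comm]
    refine Finset.sum_congr rfl (fun p hp => ?_)
    rw [hb n hn p hp, Finset.mul_sum]
  rw [trans]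
  refine Finset.sum_nonneg (fun k _ => ?_)
  exact stmt5_Kpos hα0 hα1 N t hmono (xk k)
end

section
/- Let 0 < α < 1, γ ≥ 1, and consider the graded mesh t_n = (nk)^γ for 0 ≤ n ≤ N with k = T^{1/γ}/N. Then Σ_{n=2}^N t_n^{α − 2/γ} k_n ≤ C · { k^{γ(α+1)−2}/(2/γ − (α+1)) if γ < 2/(α+1); log(t_N/t_1) if γ = 2/(α+1); t_N^{(α+1)−2/γ}/((α+1) − 2/γ) if γ > 2/(α+1) }, where k_n = t_n − t_{n−1} and C depends only on γ and α. -/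
open Finset Real

/-- Bernoulli for nonpositive exponents. -/
lemma bern_neg {t p : ℝ} (ht : 0 < t) (hp : p ≤ 0) : 1 + p * (t - 1) ≤ t ^ p := by
  have hlog : Real.log t ≤ t - 1 := Real.log_le_sub_one_of_pos ht
  have h1 : p * (t - 1) ≤ p * Real.log t := by nlinarith
  calc 1 + p * (t - 1) ≤ 1 + p * Real.log t := by linarith
    _ ≤ Real.exp (p * Real.log t) := by linarith [Real.add_one_le_exp (p * Real.log t)]
    _ = t ^ p := by rw [Real.rpow_def_of_pos ht p, mul_comm]

/-- `x^p - (x-1)^p ≤ p x^{p-1}` for `p ≥ 1` or `p ≤ 0`. -/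
lemma incr_le {x p : ℝ} (hx : 2 ≤ x) (hp : 1 ≤ p ∨ p ≤ 0) :
    x ^ p - (x - 1) ^ p ≤ p * x ^ (p - 1) := by
  have hx0 : (0:ℝ) < x := by linarith
  have hx1 : (0:ℝ) < x - 1 := by linarith
  have hs : (-1:ℝ) ≤ -(1/x) := by
    have : 1/x ≤ 1 := by rw [div_le_one hx0]; linarith
    linarith
  have key : 1 + p * (-(1/x)) ≤ (1 + -(1/x)) ^ p := by
    rcases hp with h | h
    · exact one_add_mul_self_le_rpow_one_add hs h
    · have ht : (0:ℝ) < 1 + -(1/x) := by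
        have : 1/x < 1 := by rw [div_lt_one hx0]; linarith
        linarith
      have := bern_neg ht h
      convert this using 2
      ring
  have h2 : (1 : ℝ) + -(1/x) = (x-1)/x := by field_simp; ring
  rw [h2] at key
  have hxp : (0:ℝ) < x ^ p := Real.rpow_pos_of_pos hx0 p
  have h3 : ((x-1)/x) ^ p * x ^ p = (x-1)^p := by
    rw [← Real.mul_rpow (by positivity) hx0.le]
    congr 1
    field_simp
  have h5 : (1 + p * (-(1/x))) * x ^ p ≤ (x-1)^p := by
    rw [← h3]
    exact mul_le_mul_of_nonneg_right key hxp.le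
  have h6 : x ^ (p-1) = x ^ p / x := Real.rpow_sub_one hx0.ne' p
  have h7 : (1 + p * (-(1/x))) * x ^ p = x ^ p - p * (x ^ p / x) := by
    field_simp
    ring
  rw [h6]
  rw [h7] at h5
  linarith

/-- `p x^{p-1} ≤ x^p - (x-1)^p` for `0 ≤ p ≤ 1`. -/
lemma le_incr {x p : ℝ} (hx : 2 ≤ x) (hp0 : 0 ≤ p) (hp1 : p ≤ 1) :
    p * x ^ (p - 1) ≤ x ^ p - (x - 1) ^ p := by
  have hx0 : (0:ℝ) < x := by linarith
  have hx1 : (0:ℝ) < x - 1 := by linarith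
  have hs : (-1:ℝ) ≤ -(1/x) := by
    have : 1/x ≤ 1 := by rw [div_le_one hx0]; linarith
    linarith
  have key : (1 + -(1/x)) ^ p ≤ 1 + p * (-(1/x)) :=
    rpow_one_add_le_one_add_mul_self hs hp0 hp1
  have h2 : (1 : ℝ) + -(1/x) = (x-1)/x := by field_simp; ring
  rw [h2] at key
  have hxp : (0:ℝ) < x ^ p := Real.rpow_pos_of_pos hx0 p
  have h3 : ((x-1)/x) ^ p * x ^ p = (x-1)^p := by
    rw [← Real.mul_rpow (by positivity) hx0.le]
    congr 1
    field_simp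
  have h5 : (x-1)^p ≤ (1 + p * (-(1/x))) * x ^ p := by
    rw [← h3]
    exact mul_le_mul_of_nonneg_right key hxp.le
  have h6 : x ^ (p-1) = x ^ p / x := Real.rpow_sub_one hx0.ne' p
  have h7 : (1 + p * (-(1/x))) * x ^ p = x ^ p - p * (x ^ p / x) := by
    field_simp
    ring
  rw [h6]
  rw [h7] at h5
  linarith

/-- Telescoping over `Icc 2 N`. -/
lemma tele (g : ℕ → ℝ) : ∀ N : ℕ, 1 ≤ N →
    ∑ n ∈ Finset.Icc 2 N, (g n - g (n-1)) = g N - g 1 := by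
  intro N hN
  induction N with
  | zero => omega
  | succ m ih =>
    rcases Nat.lt_or_ge m 1 with h | h
    · interval_cases m
      simp
    · rw [Finset.sum_Icc_succ_top (by omega : 2 ≤ m + 1), ih h]
      simp only [Nat.add_sub_cancel]
      ring

lemma inv_le_log {x : ℝ} (hx : 2 ≤ x) : 1/x ≤ Real.log x - Real.log (x-1) := by
  have hx0 : (0:ℝ) < x := by linarith
  have hx1 : (0:ℝ) < x - 1 := by linarith
  have h := Real.log_le_sub_one_of_pos (show (0:ℝ) < (x-1)/x by positivity)
  rw [Real.log_div hx1.ne' hx0.ne'] at h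
  have h2 : (x-1)/x - 1 = -(1/x) := by field_simp; ring
  linarith [h2 ▸ h]
lemma aux_e1 {a c z b : ℝ} (hb : b ≠ 0) : a * (c * z) = (a * c / b) * (b * z) := by
  field_simp

/-- Per-term bound for the graded mesh sum. -/
lemma term_bound {k γ α β x : ℝ} (hk : 0 < k) (hγ : 1 ≤ γ) (hx : 2 ≤ x)
    (hβ : β = γ * (α + 1) - 2) :
    ((x * k) ^ γ) ^ (α - 2/γ) * ((x * k) ^ γ - ((x - 1) * k) ^ γ)
      ≤ γ * (k ^ β * x ^ (β - 1)) := by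
  have hγ0 : (0:ℝ) < γ := by linarith
  have hx0 : (0:ℝ) < x := by linarith
  have hx1 : (0:ℝ) < x - 1 := by linarith
  have hxk : 0 < x * k := by positivity
  have hA : ((x*k)^γ)^(α-2/γ) = (x*k)^(γ*α-2) := by
    rw [← Real.rpow_mul hxk.le]
    congr 1
    field_simp
  have hB : (x*k)^γ - ((x-1)*k)^γ = (x^γ - (x-1)^γ) * k^γ := by
    rw [Real.mul_rpow hx0.le hk.le, Real.mul_rpow hx1.le hk.le]; ring
  have hincr : x^γ - (x-1)^γ ≤ γ * x^(γ-1) := incr_le hx (Or.inl hγ)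
  rw [hA, hB]
  have step : (x*k)^(γ*α-2) * ((x^γ - (x-1)^γ) * k^γ)
      ≤ (x*k)^(γ*α-2) * ((γ * x^(γ-1)) * k^γ) := by
    apply mul_le_mul_of_nonneg_left _ (Real.rpow_pos_of_pos hxk _).le
    exact mul_le_mul_of_nonneg_right hincr (Real.rpow_pos_of_pos hk _).le
  refine step.trans (le_of_eq ?_)
  rw [Real.mul_rpow hx0.le hk.le,
      show β = (γ*α-2) + γ by rw [hβ]; ring,
      show γ*α-2 + γ - 1 = (γ*α-2) + (γ-1) by ring,
      Real.rpow_add hk, Real.rpow_add hx0]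
  ring

/-- For the graded mesh `tₙ = (nk)^γ`, `k = T^{1/γ}/N`, the sum
`Σ_{n=2}^N tₙ^{α-2/γ} kₙ` is bounded according to the three regimes of `γ`
relative to `2/(α+1)` (estimate (4.18)), with `C` depending only on `γ` and `α`. -/
theorem stmt_12 (α γ T : ℝ) (hα : 0 < α ∧ α < 1) (hγ : 1 ≤ γ) (hT : 0 < T) :
    ∃ C > 0, ∀ N : ℕ, 2 ≤ N →
      ∑ n ∈ Finset.Icc 2 N,
          (((n : ℝ) * (T ^ (1/γ) / N)) ^ γ) ^ (α - 2/γ) *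
            ((((n : ℝ)) * (T ^ (1/γ) / N)) ^ γ - (((n : ℝ) - 1) * (T ^ (1/γ) / N)) ^ γ)
        ≤ C * (if γ < 2 / (α + 1) then
                 (T ^ (1/γ) / N) ^ (γ * (α + 1) - 2) / (2/γ - (α + 1))
               else if γ = 2 / (α + 1) then
                 Real.log ((((N : ℝ) * (T ^ (1/γ) / N)) ^ γ) / ((T ^ (1/γ) / N) ^ γ))
               else
                 (((N : ℝ) * (T ^ (1/γ) / N)) ^ γ) ^ ((α + 1) - 2/γ) / ((α + 1) - 2/γ)) := by
  obtain ⟨hα0, hα1⟩ := hα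
  have hγ0 : (0:ℝ) < γ := by linarith
  have hα1p : (0:ℝ) < α + 1 := by linarith
  set β := γ * (α + 1) - 2 with hβdef
  refine ⟨2*γ + 2, by linarith, ?_⟩
  intro N hN
  have hN0 : (0:ℝ) < (N:ℝ) := by
    have : 0 < N := by omega
    exact_mod_cast this
  have hN1 : (1:ℝ) ≤ (N:ℝ) := by
    have : 1 ≤ N := by omega
    exact_mod_cast this
  set k := T ^ (1/γ) / (N:ℝ) with hkdef
  have hk : 0 < k := by rw [hkdef]; positivity
  have hC1 : (1:ℝ) ≤ 2*γ+2 := by linarith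
  have hterm : ∀ n ∈ Finset.Icc 2 N,
      (((n:ℝ) * k) ^ γ) ^ (α - 2/γ) * (((n:ℝ)*k)^γ - (((n:ℝ) - 1)*k)^γ)
        ≤ γ * (k ^ β * (n:ℝ) ^ (β - 1)) := by
    intro n hn
    obtain ⟨hn2, -⟩ := Finset.mem_Icc.mp hn
    have hx : (2:ℝ) ≤ (n:ℝ) := by exact_mod_cast hn2
    exact term_bound hk hγ hx hβdef
  refine le_trans (Finset.sum_le_sum hterm) ?_
  rcases lt_trichotomy γ (2/(α+1)) with hlt | heq | hgt
  · rw [if_pos hlt]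
    have hβneg : β < 0 := by
      have h2 : γ * (α+1) < 2 := (lt_div_iff₀ hα1p).mp hlt
      rw [hβdef]; linarith
    set g : ℕ → ℝ := fun m => -((m:ℝ)^β) with hg
    have h2 : ∀ n ∈ Finset.Icc 2 N, γ * (k^β * (n:ℝ)^(β-1))
        ≤ (γ * k^β / (-β)) * (g n - g (n-1)) := by
      intro n hn
      obtain ⟨hn2, -⟩ := Finset.mem_Icc.mp hn
      have hx : (2:ℝ) ≤ (n:ℝ) := by exact_mod_cast hn2
      have h1n : (1:ℕ) ≤ n := by omega
      have hcast : ((n-1 : ℕ):ℝ) = (n:ℝ) - 1 := by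
        rw [Nat.cast_sub h1n, Nat.cast_one]
      have hgdiff : g n - g (n-1) = ((n:ℝ)-1)^β - (n:ℝ)^β := by
        simp only [hg, hcast]; ring
      rw [hgdiff]
      have hb : (n:ℝ)^β - ((n:ℝ)-1)^β ≤ β * (n:ℝ)^(β-1) := incr_le hx (Or.inr hβneg.le)
      have hkb : 0 < γ * k^β := by positivity
      have e1 : γ * (k^β * (n:ℝ)^(β-1)) = (γ*k^β/(-β)) * (-β * (n:ℝ)^(β-1)) :=
        aux_e1 (ne_of_gt (by linarith : (0:ℝ) < -β))
      rw [e1]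
      apply mul_le_mul_of_nonneg_left _ (le_of_lt (div_pos hkb (by linarith)))
      linarith
    have hrhs : ∑ n ∈ Finset.Icc 2 N, ((γ * k^β / (-β)) * (g n - g (n-1)))
        = (γ * k^β / (-β)) * (g N - g 1) := by
      rw [← Finset.mul_sum, tele g N (by omega)]
    refine ((Finset.sum_le_sum h2).trans hrhs.le).trans ?_
    have hc : 0 < γ*k^β/(-β) := div_pos (by positivity) (by linarith)
    have hgN : g N - g 1 ≤ 1 := by
      have h1 : (0:ℝ) ≤ (N:ℝ)^β := Real.rpow_nonneg hN0.le β
      simp only [hg, Nat.cast_one, Real.one_rpow]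
      linarith
    have step2 : (γ*k^β/(-β)) * (g N - g 1) ≤ γ*k^β/(-β) := by
      calc (γ*k^β/(-β)) * (g N - g 1) ≤ (γ*k^β/(-β)) * 1 :=
            mul_le_mul_of_nonneg_left hgN hc.le
        _ = γ*k^β/(-β) := mul_one _
    refine step2.trans ?_
    have hd : k^β/(2/γ-(α+1)) = γ*k^β/(-β) := by
      rw [hβdef]
      rw [show 2/γ-(α+1) = -(γ*(α+1)-2)/γ by field_simp; ring]
      rw [div_div_eq_mul_div]
      ring
    rw [hd]
    exact le_mul_of_one_le_left hc.le hC1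
  · rw [if_neg (by rw [heq]; exact lt_irrefl _), if_pos heq]
    have hβ0 : β = 0 := by
      have h2 : γ * (α+1) = 2 := by rw [heq]; field_simp
      rw [hβdef]; linarith
    have hlogeq : Real.log (((N:ℝ)*k)^γ / k^γ) = γ * Real.log N := by
      rw [Real.mul_rpow hN0.le hk.le, mul_div_assoc,
          div_self (Real.rpow_pos_of_pos hk γ).ne', mul_one, Real.log_rpow hN0]
    rw [hlogeq]
    set g : ℕ → ℝ := fun m => γ * Real.log m with hg
    have h2 : ∀ n ∈ Finset.Icc 2 N, γ * (k^β * (n:ℝ)^(β-1)) ≤ g n - g (n-1) := by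
      intro n hn
      obtain ⟨hn2, -⟩ := Finset.mem_Icc.mp hn
      have hx : (2:ℝ) ≤ (n:ℝ) := by exact_mod_cast hn2
      have hx0 : (0:ℝ) < (n:ℝ) := by linarith
      have h1n : (1:ℕ) ≤ n := by omega
      have hcast : ((n-1 : ℕ):ℝ) = (n:ℝ) - 1 := by
        rw [Nat.cast_sub h1n, Nat.cast_one]
      have hil := inv_le_log hx
      simp only [hg, hcast]
      rw [hβ0, Real.rpow_zero, one_mul, zero_sub,
          Real.rpow_neg hx0.le, Real.rpow_one]
      have e2 : ((n:ℝ))⁻¹ = 1/(n:ℝ) := by rw [one_div]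
      rw [e2]
      nlinarith [hil, hγ0]
    have hsum2 := Finset.sum_le_sum h2
    rw [tele g N (by omega)] at hsum2
    refine hsum2.trans ?_
    have hg1 : g 1 = 0 := by simp [hg]
    have hlogN : 0 ≤ Real.log N := Real.log_nonneg hN1
    rw [hg1, sub_zero]
    simp only [hg]
    have hX : 0 ≤ γ * Real.log N := mul_nonneg hγ0.le hlogN
    nlinarith [hX, mul_nonneg (by linarith : (0:ℝ) ≤ 2*γ+1) hX]
  · rw [if_neg (not_lt.mpr hgt.le), if_neg hgt.ne']
    have hβpos : 0 < β := by
      have h2 : 2 < γ * (α+1) := by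
        rw [div_lt_iff₀ hα1p] at hgt; linarith
      rw [hβdef]; linarith
    have hNk : 0 < (N:ℝ) * k := by positivity
    have hR : (((N:ℝ)*k)^γ)^((α+1)-2/γ) = (N:ℝ)^β * k^β := by
      rw [← Real.rpow_mul hNk.le,
          show γ * ((α+1)-2/γ) = β by rw [hβdef]; field_simp]
      exact Real.mul_rpow hN0.le hk.le
    have he : (α+1) - 2/γ = β/γ := by rw [hβdef]; field_simp
    rw [hR, he]
    have htgt : (2*γ+2) * (((N:ℝ)^β*k^β)/(β/γ)) = ((2*γ+2)/β) * (γ * (k^β * (N:ℝ)^β)) := by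
      rw [div_div_eq_mul_div]
      ring
    rw [htgt]
    have hβC : β ≤ 2*γ+2 := by nlinarith
    have hXpos : 0 < γ * (k^β * (N:ℝ)^β) := by positivity
    have hfac : (1:ℝ) ≤ (2*γ+2)/β := (one_le_div hβpos).mpr hβC
    rcases le_or_gt β 1 with hβ1 | hβ1
    · set g : ℕ → ℝ := fun m => (m:ℝ)^β with hg
      have h2 : ∀ n ∈ Finset.Icc 2 N, γ*(k^β*(n:ℝ)^(β-1)) ≤ (γ*k^β/β) * (g n - g (n-1)) := by
        intro n hn
        obtain ⟨hn2, -⟩ := Finset.mem_Icc.mp hn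
        have hx : (2:ℝ) ≤ (n:ℝ) := by exact_mod_cast hn2
        have h1n : (1:ℕ) ≤ n := by omega
        have hcast : ((n-1 : ℕ):ℝ) = (n:ℝ) - 1 := by
          rw [Nat.cast_sub h1n, Nat.cast_one]
        have hgdiff : g n - g (n-1) = (n:ℝ)^β - ((n:ℝ)-1)^β := by
          simp only [hg, hcast]
        rw [hgdiff]
        have hb : β * (n:ℝ)^(β-1) ≤ (n:ℝ)^β - ((n:ℝ)-1)^β := le_incr hx hβpos.le hβ1
        have hkb : 0 < γ * k^β := by positivity
        have e1 : γ * (k^β * (n:ℝ)^(β-1)) = (γ*k^β/β) * (β * (n:ℝ)^(β-1)) :=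
          aux_e1 hβpos.ne'
        rw [e1]
        exact mul_le_mul_of_nonneg_left hb (le_of_lt (div_pos hkb hβpos))
      have hrhs : ∑ n ∈ Finset.Icc 2 N, ((γ*k^β/β) * (g n - g (n-1)))
          = (γ*k^β/β) * (g N - g 1) := by
        rw [← Finset.mul_sum, tele g N (by omega)]
      refine ((Finset.sum_le_sum h2).trans hrhs.le).trans ?_
      have hg1 : g 1 = 1 := by simp [hg]
      have hstep : (γ*k^β/β) * (g N - g 1) ≤ (γ*k^β/β) * (N:ℝ)^β := by
        apply mul_le_mul_of_nonneg_left _ (by positivity)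
        rw [hg1]
        simp only [hg]
        linarith
      refine hstep.trans ?_
      have e3 : (γ*k^β/β) * (N:ℝ)^β = (1/β) * (γ * (k^β * (N:ℝ)^β)) := by ring
      rw [e3]
      apply mul_le_mul_of_nonneg_right _ hXpos.le
      rw [div_le_div_iff_of_pos_right hβpos]
      exact hC1
    · have h2 : ∀ n ∈ Finset.Icc 2 N, γ*(k^β*(n:ℝ)^(β-1)) ≤ γ*(k^β*(N:ℝ)^(β-1)) := by
        intro n hn
        obtain ⟨hn2, hnN⟩ := Finset.mem_Icc.mp hn
        have hx : (2:ℝ) ≤ (n:ℝ) := by exact_mod_cast hn2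
        have hx0 : (0:ℝ) < (n:ℝ) := by linarith
        have hxN : (n:ℝ) ≤ (N:ℝ) := by exact_mod_cast hnN
        have hmono := Real.rpow_le_rpow hx0.le hxN (by linarith : (0:ℝ) ≤ β - 1)
        have hkb : (0:ℝ) ≤ k^β := (Real.rpow_pos_of_pos hk β).le
        exact mul_le_mul_of_nonneg_left (mul_le_mul_of_nonneg_left hmono hkb) hγ0.le
      have hsum2 := Finset.sum_le_sum h2
      rw [Finset.sum_const, Nat.card_Icc, nsmul_eq_mul] at hsum2
      refine hsum2.trans ?_
      have hcard : ((N+1-2 : ℕ):ℝ) ≤ (N:ℝ) := by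
        have : N+1-2 ≤ N := by omega
        exact_mod_cast this
      have hterm_pos : (0:ℝ) ≤ γ*(k^β*(N:ℝ)^(β-1)) := by positivity
      have h4 : ((N+1-2:ℕ):ℝ) * (γ*(k^β*(N:ℝ)^(β-1))) ≤ (N:ℝ) * (γ*(k^β*(N:ℝ)^(β-1))) :=
        mul_le_mul_of_nonneg_right hcard hterm_pos
      refine h4.trans ?_
      have h5 : (N:ℝ)^(β-1) * (N:ℝ) = (N:ℝ)^β := by
        rw [← Real.rpow_add_one hN0.ne' (β-1)]
        norm_num
      have e4 : (N:ℝ) * (γ*(k^β*(N:ℝ)^(β-1))) = γ * (k^β * ((N:ℝ)^(β-1) * (N:ℝ))) := by ring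
      rw [e4, h5]
      exact le_mul_of_one_le_left hXpos.le hfac
end

section
/- Let 0 < α < 1 and suppose ‖A v'(t)‖ ≤ C t^{α−1} and ‖A v''(t)‖ ≤ C t^{α−2} on (0,T], with graded mesh t_n = (nk)^γ, γ ≥ 2/(α+1). Then the truncation errors R_1^{n−1/2} defined by R_1^{1/2} = A v(t_1) − (1/k_1)∫_0^{t_1} A v(t) dt and, for n ≥ 2, R_1^{n−1/2} = A(v(t_n)+v(t_{n−1}))/2 − (1/k_n)∫_{t_{n−1}}^{t_n} A v(t) dt, satisfy Σ_{n=1}^N k_n ‖R_1^{n−1/2}‖ ≤ C k² (up to a log factor when γ = 2/(α+1)). -/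
open MeasureTheory intervalIntegral Finset Real

lemma myL1 {p a b : ℝ} (hp : 1 ≤ p) (ha : 0 ≤ a) (hab : a ≤ b) :
    b ^ p - a ^ p ≤ p * b ^ (p - 1) * (b - a) := by
  rcases eq_or_lt_of_le (ha.trans hab) with hb | hb
  · simp [← hb, le_antisymm hab (hb ▸ ha)]
  · have hs : (-1 : ℝ) ≤ (a - b) / b := by
      rw [le_div_iff₀ hb]; linarith
    have h := one_add_mul_self_le_rpow_one_add hs hp
    have h1 : (1 : ℝ) + (a - b) / b = a / b := by field_simp; ring
    rw [h1, Real.div_rpow ha hb.le] at h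
    have hbp : (0:ℝ) < b ^ p := Real.rpow_pos_of_pos hb _
    rw [le_div_iff₀ hbp] at h
    have hb1 : b ^ p = b ^ (p - 1) * b := by
      rw [← Real.rpow_add_one hb.ne' (p-1)]; ring_nf
    have key : ((a - b) / b) * b ^ p = (a - b) * b ^ (p - 1) := by
      rw [hb1]; field_simp
    nlinarith
lemma myL2 {p a b : ℝ} (hp : 1 ≤ p) (ha : 0 < a) (hab : a ≤ b) :
    p * a ^ (p - 1) * (b - a) ≤ b ^ p - a ^ p := by
  have hs : (-1 : ℝ) ≤ (b - a) / a := by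
    rw [le_div_iff₀ ha]; linarith
  have h := one_add_mul_self_le_rpow_one_add hs hp
  have h1 : (1 : ℝ) + (b - a) / a = b / a := by field_simp; ring
  rw [h1, Real.div_rpow (ha.le.trans hab) ha.le] at h
  have hap : (0:ℝ) < a ^ p := Real.rpow_pos_of_pos ha _
  rw [le_div_iff₀ hap] at h
  have ha1 : a ^ p = a ^ (p - 1) * a := by
    rw [← Real.rpow_add_one ha.ne' (p-1)]; ring_nf
  have key : ((b - a) / a) * a ^ p = (b - a) * a ^ (p - 1) := by
    rw [ha1]; field_simp
  nlinarith
lemma myL3 {p a b : ℝ} (hp0 : 0 ≤ p) (hp : p ≤ 1) (ha : 0 < a) (hab : a ≤ b) :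
    p * b ^ (p - 1) * (b - a) ≤ b ^ p - a ^ p := by
  have hb : 0 < b := ha.trans_le hab
  have hs : (-1 : ℝ) ≤ (a - b) / b := by
    rw [le_div_iff₀ hb]; linarith
  have h := rpow_one_add_le_one_add_mul_self hs hp0 hp
  have h1 : (1 : ℝ) + (a - b) / b = a / b := by field_simp; ring
  rw [h1, Real.div_rpow ha.le hb.le] at h
  have hbp : (0:ℝ) < b ^ p := Real.rpow_pos_of_pos hb _
  rw [div_le_iff₀ hbp] at h
  have hb1 : b ^ p = b ^ (p - 1) * b := by
    rw [← Real.rpow_add_one hb.ne' (p-1)]; ring_nf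
  have key : ((a - b) / b) * b ^ p = (a - b) * b ^ (p - 1) := by
    rw [hb1]; field_simp
  nlinarith
-- telescoping
lemma mytel (f : ℕ → ℝ) : ∀ N : ℕ, 1 ≤ N →
    ∑ n ∈ Finset.Icc 2 N, (f n - f (n - 1)) = f N - f 1 := by
  intro N
  induction N with
  | zero => omega
  | succ M ih =>
    intro _
    rcases Nat.lt_or_ge M 1 with hM | hM
    · interval_cases M
      · simp
    · rw [Finset.sum_Icc_succ_top (by omega : 2 ≤ M + 1)]
      rw [ih hM]
      simp
-- harmonic
lemma myharm : ∀ N : ℕ, 1 ≤ N →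
    ∑ n ∈ Finset.Icc 2 N, ((n : ℝ))⁻¹ ≤ Real.log N := by
  intro N
  induction N with
  | zero => omega
  | succ M ih =>
    intro _
    rcases Nat.lt_or_ge M 1 with hM | hM
    · interval_cases M
      · simp
    · rw [Finset.sum_Icc_succ_top (by omega : 2 ≤ M + 1)]
      have hM0 : (0:ℝ) < M := by exact_mod_cast hM
      have key : ((M:ℝ) + 1)⁻¹ ≤ Real.log (M+1) - Real.log M := by
        rw [← Real.log_div (by positivity) (by positivity)]
        have h2 : Real.log ((M:ℝ)/(M+1)) ≤ (M:ℝ)/(M+1) - 1 :=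
          Real.log_le_sub_one_of_pos (by positivity)
        have h3 : Real.log ((M:ℝ)/(M+1)) = - Real.log ((M+1)/M) := by
          rw [← Real.log_inv]; congr 1; field_simp
        rw [h3] at h2
        have : (M:ℝ)/(M+1) - 1 = -((M:ℝ)+1)⁻¹ := by field_simp; ring
        linarith [this ▸ h2]
      have := ih hM
      push_cast
      push_cast at this
      linarith

lemma mytrap {H : Type*} [NormedAddCommGroup H] [NormedSpace ℝ H] [CompleteSpace H]
    (w w' w'' : ℝ → H) (a b K : ℝ) (hK : 0 ≤ K) (hab : a < b)
    (hd1 : ∀ x ∈ Set.Icc a b, HasDerivAt w (w' x) x)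
    (hd2 : ∀ x ∈ Set.Icc a b, HasDerivAt w' (w'' x) x)
    (hbd : ∀ x ∈ Set.Icc a b, ‖w'' x‖ ≤ K) :
    (b - a) * ‖(2:ℝ)⁻¹ • (w b + w a) - (b - a)⁻¹ • ∫ s in a..b, w s‖
      ≤ K * (b - a) ^ 3 / 4 := by
  set m : ℝ := (a + b) / 2 with hm
  have hmm : m ∈ Set.Icc a b := by constructor <;> [skip; skip] <;> simp [hm] <;> linarith
  have hne : b - a ≠ 0 := sub_ne_zero.2 hab.ne'
  have hpos : 0 < b - a := sub_pos.2 hab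
  have huIcc : Set.uIcc a b = Set.Icc a b := Set.uIcc_of_le hab.le
  have hcw : ContinuousOn w (Set.Icc a b) :=
    fun x hx => ((hd1 x hx).continuousAt).continuousWithinAt
  have hcw' : ContinuousOn w' (Set.Icc a b) :=
    fun x hx => ((hd2 x hx).continuousAt).continuousWithinAt
  have hiw : IntervalIntegrable w volume a b :=
    (hcw.mono (by rw [huIcc])).intervalIntegrable
  have hig : IntervalIntegrable (fun s => (s - m) • w' s) volume a b := by
    apply ContinuousOn.intervalIntegrable
    rw [huIcc]
    exact ((continuousOn_id.sub continuousOn_const).smul hcw')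
  have hig2 : IntervalIntegrable (fun s => (s - m) • w' m) volume a b := by
    apply ContinuousOn.intervalIntegrable
    exact ((continuousOn_id.sub continuousOn_const).smul continuousOn_const)
  set I : H := ∫ s in a..b, (s - m) • w' s with hI
  -- FTC
  have hftc : ∫ s in a..b, (w s + (s - m) • w' s)
      = (b - m) • w b - (a - m) • w a := by
    have := intervalIntegral.integral_eq_sub_of_hasDerivAt
      (f := fun s => (s - m) • w s) (f' := fun s => w s + (s - m) • w' s)
      (a := a) (b := b) ?_ (hiw.add hig)
    · simpa using this
    · intro x hx
      rw [huIcc] at hx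
      have h1 : HasDerivAt (fun s : ℝ => s - m) 1 x := (hasDerivAt_id x).sub_const m
      have := h1.smul (hd1 x hx)
      exact (by simpa [one_smul, add_comm] using this :
        HasDerivAt ((fun s => s - m) • w) (w x + (x - m) • w' x) x)
  have heq : ∫ s in a..b, w s = (b - m) • w b - (a - m) • w a - I := by
    rw [← hftc, intervalIntegral.integral_add hiw hig]
    abel
  -- I equals the centered integral
  have hIJ : I = ∫ s in a..b, (s - m) • (w' s - w' m) := by
    have : (fun s => (s - m) • (w' s - w' m))
        = fun s => (s - m) • w' s - (s - m) • w' m := by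
      funext s; rw [smul_sub]
    rw [this, intervalIntegral.integral_sub hig hig2,
      intervalIntegral.integral_smul_const]
    have hzero : (∫ s in a..b, (s - m)) = 0 := by
      rw [intervalIntegral.integral_sub intervalIntegrable_id
        intervalIntegrable_const, integral_id,
        intervalIntegral.integral_const]
      field_simp [hm]; ring
    rw [hzero, zero_smul, sub_zero]
  -- bound on I
  have hIbound : ‖I‖ ≤ K * (b - a) ^ 2 / 4 * (b - a) := by
    rw [hIJ]
    have := intervalIntegral.norm_integral_le_of_norm_le_const
      (C := K * (b - a) ^ 2 / 4) (f := fun s => (s - m) • (w' s - w' m))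
      (a := a) (b := b) ?_
    · calc ‖∫ s in a..b, (s - m) • (w' s - w' m)‖
          ≤ K * (b - a) ^ 2 / 4 * |b - a| := this
        _ = K * (b - a) ^ 2 / 4 * (b - a) := by rw [abs_of_pos hpos]
    · intro x hx
      rw [Set.uIoc_of_le hab.le] at hx
      have hxIcc : x ∈ Set.Icc a b := ⟨hx.1.le, hx.2⟩
      have hmvt : ‖w' x - w' m‖ ≤ K * ‖x - m‖ := by
        apply Convex.norm_image_sub_le_of_norm_hasDerivWithin_le
          (f := w') (f' := w'') (C := K) (s := Set.Icc a b)
          (fun y hy => (hd2 y hy).hasDerivWithinAt) hbd (convex_Icc a b) hmm hxIcc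
      have habs : |x - m| ≤ (b - a) / 2 := by
        rw [abs_le]; constructor <;> simp [hm] at hxIcc ⊢ <;> cases hxIcc <;> linarith
      rw [norm_smul, Real.norm_eq_abs]
      calc |x - m| * ‖w' x - w' m‖ ≤ |x - m| * (K * |x - m|) := by
            apply mul_le_mul_of_nonneg_left _ (abs_nonneg _)
            simpa [Real.norm_eq_abs] using hmvt
        _ ≤ ((b-a)/2) * (K * ((b-a)/2)) := by
            apply mul_le_mul habs _ (by positivity) (by linarith)
            exact mul_le_mul_of_nonneg_left habs hK
        _ = K * (b - a) ^ 2 / 4 := by ring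
  -- rewrite the error as (b-a)⁻¹ • I
  have hkey : (2:ℝ)⁻¹ • (w b + w a) - (b - a)⁻¹ • ∫ s in a..b, w s
      = (b - a)⁻¹ • I := by
    rw [heq]
    have hbm : b - m = (b - a) / 2 := by rw [hm]; ring
    have ham : a - m = -((b - a) / 2) := by rw [hm]; ring
    rw [hbm, ham, smul_sub, smul_sub, smul_smul, smul_smul]
    have e1 : (b - a)⁻¹ * ((b - a) / 2) = (2:ℝ)⁻¹ := by field_simp
    rw [e1]
    have e2 : (b - a)⁻¹ * -((b - a) / 2) = -(2:ℝ)⁻¹ := by field_simp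
    rw [e2, smul_add, neg_smul]
    abel
  rw [hkey, norm_smul, Real.norm_eq_abs, abs_of_pos (inv_pos.2 hpos)]
  calc (b - a) * ((b - a)⁻¹ * ‖I‖) = ‖I‖ := by field_simp
    _ ≤ K * (b - a) ^ 2 / 4 * (b - a) := hIbound
    _ = K * (b - a) ^ 3 / 4 := by ring

lemma myfirst {H : Type*} [NormedAddCommGroup H] [NormedSpace ℝ H] [CompleteSpace H]
    (w w' : ℝ → H) (C α T t1 : ℝ) (hα : 0 < α) (hC : 0 < C)
    (ht1 : 0 < t1) (ht1T : t1 ≤ T)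
    (hd1 : ∀ x ∈ Set.Ioc (0:ℝ) T, HasDerivAt w (w' x) x)
    (hcw' : ∀ x ∈ Set.Ioc (0:ℝ) T, ContinuousAt w' x)
    (hb1 : ∀ x ∈ Set.Ioc (0:ℝ) T, ‖w' x‖ ≤ C * x ^ (α - 1)) :
    t1 * ‖w t1 - t1⁻¹ • ∫ s in (0:ℝ)..t1, w s‖ ≤ C * t1 ^ (α + 1) / α := by
  have ht1mem : t1 ∈ Set.Ioc (0:ℝ) T := ⟨ht1, ht1T⟩
  -- (a) pointwise bound
  have hdiff : ∀ s ∈ Set.Ioc (0:ℝ) t1, ‖w t1 - w s‖ ≤ C * t1 ^ α / α := by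
    intro s hs
    have hsub : Set.Icc s t1 ⊆ Set.Ioc (0:ℝ) T := fun x hx =>
      ⟨hs.1.trans_le hx.1, hx.2.trans ht1T⟩
    have hcw'2 : ContinuousOn w' (Set.Icc s t1) := fun x hx =>
      (hcw' x (hsub hx)).continuousWithinAt
    have hftc : ∫ u in s..t1, w' u = w t1 - w s := by
      apply intervalIntegral.integral_eq_sub_of_hasDerivAt
      · intro x hx
        rw [Set.uIcc_of_le hs.2] at hx
        exact hd1 x (hsub hx)
      · exact (hcw'2.mono (by rw [Set.uIcc_of_le hs.2])).intervalIntegrable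
    rw [← hftc]
    have hbint : IntervalIntegrable (fun u : ℝ => C * u ^ (α - 1)) volume s t1 := by
      apply ContinuousOn.intervalIntegrable
      apply ContinuousOn.mul continuousOn_const
      apply ContinuousOn.rpow_const continuousOn_id
      intro x hx
      rw [Set.uIcc_of_le hs.2] at hx
      exact Or.inl (ne_of_gt (hs.1.trans_le hx.1))
    have hnorm : ‖∫ u in s..t1, w' u‖ ≤ |∫ u in s..t1, C * u ^ (α - 1)| := by
      apply intervalIntegral.norm_integral_le_abs_of_norm_le ?_ hbint
      apply (ae_restrict_iff' measurableSet_uIoc).2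
      filter_upwards with x hx
      rw [Set.uIoc_of_le hs.2] at hx
      exact hb1 x ⟨hs.1.trans hx.1, hx.2.trans ht1T⟩
    have hval : ∫ u in s..t1, C * u ^ (α - 1)
        = C * ((t1 ^ α - s ^ α) / α) := by
      rw [intervalIntegral.integral_const_mul, integral_rpow (Or.inl (by linarith))]
      ring_nf
    have hsα : 0 ≤ s ^ α := Real.rpow_nonneg hs.1.le α
    have hmono : s ^ α ≤ t1 ^ α := Real.rpow_le_rpow hs.1.le hs.2 hα.le
    have habs : |∫ u in s..t1, C * u ^ (α - 1)| = C * ((t1 ^ α - s ^ α) / α) := by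
      rw [hval, abs_of_nonneg (mul_nonneg hC.le (div_nonneg (by linarith) hα.le))]
    calc ‖∫ u in s..t1, w' u‖ ≤ C * ((t1 ^ α - s ^ α) / α) := habs ▸ hnorm
      _ ≤ C * (t1 ^ α / α) := by gcongr; linarith
      _ = C * t1 ^ α / α := by ring
  -- (b) integrability of w on (0, t1]
  have hcont : ContinuousOn w (Set.Ioc 0 t1) := fun x hx =>
    ((hd1 x ⟨hx.1, hx.2.trans ht1T⟩).continuousAt).continuousWithinAt
  set M : ℝ := ‖w t1‖ + C * t1 ^ α / α with hM
  have hwbd : ∀ s ∈ Set.Ioc (0:ℝ) t1, ‖w s‖ ≤ M := by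
    intro s hs
    have := hdiff s hs
    have h2 := norm_sub_norm_le (w s) (w t1)
    rw [norm_sub_rev] at h2
    rw [hM]; linarith
  have hiw : IntervalIntegrable w volume 0 t1 := by
    rw [intervalIntegrable_iff, Set.uIoc_of_le ht1.le]
    apply Integrable.mono' (g := fun _ => M) (integrableOn_const (by
      rw [Real.volume_Ioc]; exact ENNReal.ofReal_ne_top))
    · exact (hcont.aestronglyMeasurable measurableSet_Ioc)
    · exact (ae_restrict_iff' measurableSet_Ioc).2 (Filter.Eventually.of_forall hwbd)
  -- (c) rewrite
  have hconst : ∫ s in (0:ℝ)..t1, w t1 = t1 • w t1 := by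
    rw [intervalIntegral.integral_const]; simp
  have hrw : w t1 - t1⁻¹ • ∫ s in (0:ℝ)..t1, w s
      = t1⁻¹ • ∫ s in (0:ℝ)..t1, (w t1 - w s) := by
    rw [intervalIntegral.integral_sub intervalIntegrable_const hiw, hconst,
      smul_sub, smul_smul, inv_mul_cancel₀ ht1.ne', one_smul]
  -- (d) final bound
  have hnormI : ‖∫ s in (0:ℝ)..t1, (w t1 - w s)‖ ≤ C * t1 ^ α / α * |t1 - 0| := by
    apply intervalIntegral.norm_integral_le_of_norm_le_const
    intro x hx
    rw [Set.uIoc_of_le ht1.le] at hx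
    exact hdiff x hx
  rw [hrw, norm_smul, Real.norm_eq_abs, abs_of_pos (inv_pos.2 ht1)]
  have habs : |t1 - 0| = t1 := by rw [sub_zero, abs_of_pos ht1]
  rw [habs] at hnormI
  have h2 : t1 * (t1⁻¹ * ‖∫ s in (0:ℝ)..t1, (w t1 - w s)‖)
      = ‖∫ s in (0:ℝ)..t1, (w t1 - w s)‖ := by
    field_simp
  rw [h2]
  calc ‖∫ s in (0:ℝ)..t1, (w t1 - w s)‖ ≤ C * t1 ^ α / α * t1 := hnormI
    _ = C * t1 ^ (α + 1) / α := by
        rw [Real.rpow_add_one ht1.ne' α]; ring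

set_option maxHeartbeats 1000000 in
/-- Lemma 4.5: with `w = A v` satisfying `‖w'(t)‖ ≤ C t^{α-1}`,
`‖w''(t)‖ ≤ C t^{α-2}` on `(0,T]` and the graded mesh `tₙ = (nk)^γ` with
`γ ≥ 2/(α+1)`, the truncation errors `R₁^{n-1/2}` satisfy
`Σ_{n=1}^N kₙ ‖R₁^{n-1/2}‖ ≤ C' k²` (with a log factor when `γ = 2/(α+1)`). -/
theorem stmt_13 {H : Type*} [NormedAddCommGroup H] [NormedSpace ℝ H] [CompleteSpace H]
    (α γ T C : ℝ) (hα : 0 < α ∧ α < 1) (hγ : 2 / (α + 1) ≤ γ) (hT : 0 < T) (hC : 0 < C)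
    (w w' w'' : ℝ → H)
    (hd1 : ∀ t ∈ Set.Ioc (0:ℝ) T, HasDerivAt w (w' t) t)
    (hd2 : ∀ t ∈ Set.Ioc (0:ℝ) T, HasDerivAt w' (w'' t) t)
    (hb1 : ∀ t ∈ Set.Ioc (0:ℝ) T, ‖w' t‖ ≤ C * t ^ (α - 1))
    (hb2 : ∀ t ∈ Set.Ioc (0:ℝ) T, ‖w'' t‖ ≤ C * t ^ (α - 2)) :
    ∃ C' > 0, ∀ N : ℕ, 2 ≤ N →
      ∀ k : ℝ, k = T ^ (1/γ) / N →
      ∀ t : ℕ → ℝ, (∀ n : ℕ, t n = ((n : ℝ) * k) ^ γ) →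
      (t 1 - t 0) * ‖w (t 1) - (t 1 - t 0)⁻¹ • ∫ s in (t 0)..(t 1), w s‖
        + ∑ n ∈ Finset.Icc 2 N, (t n - t (n - 1)) *
            ‖(2:ℝ)⁻¹ • (w (t n) + w (t (n - 1)))
              - (t n - t (n - 1))⁻¹ • ∫ s in (t (n - 1))..(t n), w s‖
      ≤ C' * (if γ = 2 / (α + 1) then k ^ 2 * Real.log (t N / t 1) else k ^ 2) := by
  obtain ⟨hα0, hα1⟩ := hα
  have hα1' : (0:ℝ) < α + 1 := by linarith
  have hγ1 : 1 < γ := by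
    have h2 : 1 < 2 / (α + 1) := by rw [lt_div_iff₀ hα1']; linarith
    linarith
  have hγ0 : 0 < γ := by linarith
  set β : ℝ := γ * (α + 1) with hβ
  have hβ2 : 2 ≤ β := by
    rw [hβ]
    rw [div_le_iff₀ hα1'] at hγ
    linarith
  set p : ℝ := β - 2 with hp
  have hp0 : 0 ≤ p := by simp [hp]; linarith
  set D : ℝ := C * (2:ℝ) ^ (γ * (2 - α)) * γ ^ 3 / 4 with hD
  have hD0 : 0 < D := by
    rw [hD]
    have := Real.rpow_pos_of_pos (by norm_num : (0:ℝ) < 2) (γ * (2 - α))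
    positivity
  set Q : ℝ := ((2:ℝ) ^ (p - 1) + 1) / p with hQ
  -- the key per-step and first-step bounds
  have key : ∀ N : ℕ, 2 ≤ N → ∀ k : ℝ, k = T ^ (1/γ) / N →
      ∀ t : ℕ → ℝ, (∀ n : ℕ, t n = ((n : ℝ) * k) ^ γ) →
      0 < k ∧ (N:ℝ) * k = T ^ (1/γ) ∧ t 0 = 0 ∧ t N = T ∧ t 1 = k ^ γ ∧
      ((t 1 - t 0) * ‖w (t 1) - (t 1 - t 0)⁻¹ • ∫ s in (t 0)..(t 1), w s‖
          ≤ C / α * k ^ β) ∧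
      (∀ n ∈ Finset.Icc 2 N, (t n - t (n - 1)) *
            ‖(2:ℝ)⁻¹ • (w (t n) + w (t (n - 1)))
              - (t n - t (n - 1))⁻¹ • ∫ s in (t (n - 1))..(t n), w s‖
          ≤ D * ((n:ℝ)) ^ (β - 3) * k ^ β) := by
    intro N hN k hk t ht
    have hN0 : (0:ℝ) < N := by positivity
    have hk0 : 0 < k := by
      rw [hk]
      exact div_pos (Real.rpow_pos_of_pos hT _) hN0
    have hkN : (N:ℝ) * k = T ^ (1/γ) := by
      rw [hk]; field_simp
    have ht0 : t 0 = 0 := by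
      rw [ht 0]; simp [Real.zero_rpow hγ0.ne']
    have htN : t N = T := by
      rw [ht N, hkN, ← Real.rpow_mul hT.le]
      rw [one_div, inv_mul_cancel₀ hγ0.ne', Real.rpow_one]
    have ht1 : t 1 = k ^ γ := by rw [ht 1]; norm_num
    have htnT : ∀ n : ℕ, n ≤ N → t n ≤ T := by
      intro n hn
      rw [← htN, ht n, ht N]
      apply Real.rpow_le_rpow (by positivity) _ hγ0.le
      have h1 : (n:ℝ) ≤ (N:ℝ) := by exact_mod_cast hn
      exact mul_le_mul_of_nonneg_right h1 hk0.le
    refine ⟨hk0, hkN, ht0, htN, ht1, ?_, ?_⟩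
    · -- first interval
      have ht1pos : 0 < t 1 := by rw [ht1]; positivity
      have hfir := myfirst w w' C α T (t 1) hα0 hC ht1pos (htnT 1 (by omega)) hd1
        (fun x hx => (hd2 x hx).continuousAt) hb1
      rw [ht0, sub_zero]
      calc t 1 * ‖w (t 1) - (t 1)⁻¹ • ∫ s in (0:ℝ)..(t 1), w s‖
          ≤ C * (t 1) ^ (α + 1) / α := hfir
        _ = C / α * k ^ β := by
            rw [ht1, ← Real.rpow_mul hk0.le, ← hβ]
            ring
    · intro n hn
      rw [Finset.mem_Icc] at hn
      obtain ⟨hn2, hnN⟩ := hn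
      set u : ℝ := (n : ℝ) with hu
      have hu2 : (2:ℝ) ≤ u := by rw [hu]; exact_mod_cast hn2
      have hcast : ((n - 1 : ℕ) : ℝ) = u - 1 := by
        rw [hu, Nat.cast_sub (by omega : 1 ≤ n)]; norm_num
      have ha : t (n-1) = ((u - 1) * k) ^ γ := by rw [ht (n-1), hcast]
      have hbt : t n = (u * k) ^ γ := by rw [ht n]
      have hu1 : (0:ℝ) < u - 1 := by linarith
      have hxk : 0 < (u - 1) * k := by positivity
      have hyk : 0 < u * k := by positivity
      have hxy : (u-1)*k < u*k := by
        exact mul_lt_mul_of_pos_right (by linarith) hk0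
      have hapos : 0 < t (n-1) := by rw [ha]; positivity
      have hblta : t (n-1) < t n := by
        rw [ha, hbt]; exact Real.rpow_lt_rpow hxk.le hxy hγ0
      have hbT : t n ≤ T := htnT n hnN
      have hIccsub : Set.Icc (t (n-1)) (t n) ⊆ Set.Ioc 0 T := fun x hx =>
        ⟨hapos.trans_le hx.1, hx.2.trans hbT⟩
      set K : ℝ := C * (t (n-1)) ^ (α - 2) with hK
      have hK0 : 0 ≤ K := by
        rw [hK]
        have := Real.rpow_pos_of_pos hapos (α - 2)
        positivity
      have hbd : ∀ x ∈ Set.Icc (t (n-1)) (t n), ‖w'' x‖ ≤ K := by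
        intro x hx
        calc ‖w'' x‖ ≤ C * x ^ (α - 2) := hb2 x (hIccsub hx)
          _ ≤ K := by
            rw [hK]
            exact mul_le_mul_of_nonneg_left
              (Real.rpow_le_rpow_of_nonpos hapos hx.1 (by linarith)) hC.le
      have htrap := mytrap w w' w'' (t (n-1)) (t n) K hK0 hblta
        (fun x hx => hd1 x (hIccsub hx)) (fun x hx => hd2 x (hIccsub hx)) hbd
      -- mesh width bound
      have hwidth : t n - t (n-1) ≤ γ * (u*k) ^ (γ - 1) * k := by
        rw [ha, hbt]
        calc (u*k)^γ - ((u-1)*k)^γ ≤ γ * (u*k)^(γ-1) * (u*k - (u-1)*k) :=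
              myL1 (le_of_lt hγ1) hxk.le hxy.le
          _ = γ * (u*k)^(γ-1) * k := by ring_nf
      -- left endpoint bound
      have ha2 : (t (n-1)) ^ (α - 2) ≤ 2 ^ (γ*(2-α)) * (u*k) ^ (γ*(α-2)) := by
        rw [ha, ← Real.rpow_mul hxk.le]
        have hstep : u*k/2 ≤ (u-1)*k := by
          calc u*k/2 = (u/2)*k := by ring
            _ ≤ (u-1)*k := mul_le_mul_of_nonneg_right (by linarith) hk0.le
        have hneg : γ*(α-2) ≤ 0 := by
          have h := mul_le_mul_of_nonneg_left (show α - 2 ≤ (0:ℝ) by linarith) hγ0.le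
          simpa using h
        have h1 : ((u-1)*k) ^ (γ*(α-2)) ≤ (u*k/2) ^ (γ*(α-2)) :=
          Real.rpow_le_rpow_of_nonpos (by positivity) hstep hneg
        have h2 : (u*k/2) ^ (γ*(α-2)) = (u*k)^(γ*(α-2)) / 2^(γ*(α-2)) :=
          Real.div_rpow hyk.le (by norm_num) _
        have h3 : (u*k)^(γ*(α-2)) / 2^(γ*(α-2))
            = 2 ^ (γ*(2-α)) * (u*k) ^ (γ*(α-2)) := by
          rw [div_eq_mul_inv, ← Real.rpow_neg (by norm_num : (0:ℝ) ≤ 2),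
            show -(γ*(α-2)) = γ*(2-α) by ring]
          ring
        rw [← h3, ← h2]
        exact h1
      -- pure rpow algebra
      have e3 : ((u*k) ^ (γ-1)) ^ (3:ℕ) = (u*k) ^ ((γ-1) * 3) := by
        rw [← Real.rpow_natCast ((u*k) ^ (γ-1)) 3, ← Real.rpow_mul hyk.le]
        norm_num
      have h1 : (u*k)^(γ*(α-2)) * (u*k)^((γ-1)*3) = (u*k)^(β-3) := by
        rw [← Real.rpow_add hyk]; congr 1; rw [hβ]; ring
      have h2 : (u*k)^(β-3) = u^(β-3) * k^(β-3) :=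
        Real.mul_rpow (by positivity) hk0.le
      have h3 : k^(3:ℕ) * k^(β-3) = k^β := by
        rw [← Real.rpow_natCast k 3, ← Real.rpow_add hk0]; norm_num
      have halg : C * (2^(γ*(2-α)) * (u*k)^(γ*(α-2))) * (γ * (u*k)^(γ-1) * k)^(3:ℕ) / 4
          = D * u ^ (β - 3) * k ^ β := by
        calc C * (2^(γ*(2-α)) * (u*k)^(γ*(α-2))) * (γ * (u*k)^(γ-1) * k)^(3:ℕ) / 4
            = (C * 2^(γ*(2-α)) * γ^3 / 4) * ((u*k)^(γ*(α-2)) * (u*k)^((γ-1)*3))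
                * k^(3:ℕ) := by rw [mul_pow, mul_pow, e3]; ring
          _ = (C * 2^(γ*(2-α)) * γ^3 / 4) * (u^(β-3) * k^(β-3)) * k^(3:ℕ) := by
                rw [h1, h2]
          _ = D * u ^ (β-3) * (k^(3:ℕ) * k^(β-3)) := by rw [hD]; ring
          _ = D * u ^ (β-3) * k^β := by rw [h3]
      have hX : 0 ≤ t n - t (n-1) := by linarith
      have hbig : K * (t n - t (n-1))^(3:ℕ)
          ≤ C * (2^(γ*(2-α)) * (u*k)^(γ*(α-2))) * (γ * (u*k)^(γ-1) * k)^(3:ℕ) := by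
        apply mul_le_mul _ (pow_le_pow_left₀ hX hwidth 3) (by positivity) _
        · rw [hK]
          exact mul_le_mul_of_nonneg_left ha2 hC.le
        · have := Real.rpow_pos_of_pos (show (0:ℝ) < 2 by norm_num) (γ*(2-α))
          have := Real.rpow_pos_of_pos hyk (γ*(α-2))
          positivity
      calc (t n - t (n-1)) * ‖(2:ℝ)⁻¹ • (w (t n) + w (t (n - 1)))
              - (t n - t (n - 1))⁻¹ • ∫ s in (t (n - 1))..(t n), w s‖
          ≤ K * (t n - t (n-1))^3 / 4 := htrap
        _ ≤ C * (2^(γ*(2-α)) * (u*k)^(γ*(α-2))) * (γ * (u*k)^(γ-1) * k)^(3:ℕ) / 4 := by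
            linarith
        _ = D * u ^ (β - 3) * k ^ β := halg
  by_cases hcase : γ = 2 / (α + 1)
  · -- log case : β = 2
    have hβeq : β = 2 := by
      rw [hβ, hcase]; field_simp
    have hlog2 : (0:ℝ) < Real.log 2 := Real.log_pos (by norm_num)
    set X : ℝ := C / (α * Real.log 2) + D with hX
    have hX0 : 0 < X := by rw [hX]; positivity
    refine ⟨X / γ + 1, by positivity, ?_⟩
    intro N hN k hk t ht
    obtain ⟨hk0, hkN, ht0, htN, ht1, hfirst, hterm⟩ := key N hN k hk t ht
    rw [if_pos hcase]
    have hN0 : (0:ℝ) < N := by positivity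
    have hN1 : (1:ℝ) < N := by exact_mod_cast (by omega : 1 < N)
    set L : ℝ := Real.log N with hL
    have hL0 : 0 < L := Real.log_pos hN1
    have hlog2L : Real.log 2 ≤ L := Real.log_le_log (by norm_num) (by exact_mod_cast hN)
    have hratio : t N / t 1 = (N:ℝ) ^ γ := by
      rw [ht N, ht1, ← Real.div_rpow (by positivity) hk0.le]
      congr 1
      field_simp
    have hlogr : Real.log (t N / t 1) = γ * L := by
      rw [hratio, Real.log_rpow hN0, hL]
    have hkβ : k ^ β = k ^ (2:ℕ) := by
      rw [hβeq, show ((2:ℝ)) = ((2:ℕ):ℝ) by norm_num, Real.rpow_natCast]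
    have hsum : ∑ n ∈ Finset.Icc 2 N, (t n - t (n - 1)) *
            ‖(2:ℝ)⁻¹ • (w (t n) + w (t (n - 1)))
              - (t n - t (n - 1))⁻¹ • ∫ s in (t (n - 1))..(t n), w s‖
        ≤ D * k ^ (2:ℕ) * L := by
      calc ∑ n ∈ Finset.Icc 2 N, (t n - t (n - 1)) *
            ‖(2:ℝ)⁻¹ • (w (t n) + w (t (n - 1)))
              - (t n - t (n - 1))⁻¹ • ∫ s in (t (n - 1))..(t n), w s‖
          ≤ ∑ n ∈ Finset.Icc 2 N, D * ((n:ℝ)) ^ (β - 3) * k ^ β :=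
            Finset.sum_le_sum hterm
        _ = D * k ^ (2:ℕ) * ∑ n ∈ Finset.Icc 2 N, ((n:ℝ))⁻¹ := by
            rw [Finset.mul_sum]
            apply Finset.sum_congr rfl
            intro n hn
            rw [show β - 3 = (-1:ℝ) by rw [hβeq]; norm_num, Real.rpow_neg_one, hkβ]
            ring
        _ ≤ D * k ^ (2:ℕ) * L := by
            apply mul_le_mul_of_nonneg_left (myharm N (by omega)) (by positivity)
    rw [hlogr]
    have hmain : C / α + D * L ≤ (X / γ + 1) * γ * L := by
      have h1 : C / (α * Real.log 2) * Real.log 2 = C / α := by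
        field_simp
      have m1 : C / α ≤ C / (α * Real.log 2) * L := by
        rw [← h1]
        exact mul_le_mul_of_nonneg_left hlog2L (by positivity)
      have e : (X / γ + 1) * γ * L = C / (α * Real.log 2) * L + D * L + γ * L := by
        rw [hX]; field_simp
      rw [e]
      have : 0 ≤ γ * L := by positivity
      linarith
    calc (t 1 - t 0) * ‖w (t 1) - (t 1 - t 0)⁻¹ • ∫ s in (t 0)..(t 1), w s‖
        + ∑ n ∈ Finset.Icc 2 N, (t n - t (n - 1)) *
            ‖(2:ℝ)⁻¹ • (w (t n) + w (t (n - 1)))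
              - (t n - t (n - 1))⁻¹ • ∫ s in (t (n - 1))..(t n), w s‖
        ≤ C / α * k ^ β + D * k ^ (2:ℕ) * L := by linarith
      _ = (C / α + D * L) * k ^ (2:ℕ) := by rw [hkβ]; ring
      _ ≤ ((X / γ + 1) * γ * L) * k ^ (2:ℕ) := by
          apply mul_le_mul_of_nonneg_right hmain (by positivity)
      _ = (X / γ + 1) * (k ^ 2 * (γ * L)) := by ring
  · -- no-log case : p > 0
    have hβne : β ≠ 2 := by
      intro h
      apply hcase
      rw [hβ] at h
      field_simp
      linarith [h]
    have hp_pos : 0 < p := lt_of_le_of_ne hp0 (by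
      intro h
      exact hβne (by rw [hp] at h; linarith))
    have hQ0 : 0 < Q := by
      rw [hQ]
      have := Real.rpow_pos_of_pos (show (0:ℝ) < 2 by norm_num) (p - 1)
      positivity
    have hS0 : (0:ℝ) < (T ^ (1/γ)) ^ p := by
      have := Real.rpow_pos_of_pos hT (1/γ)
      positivity
    refine ⟨(C / α + D * Q) * (T ^ (1/γ)) ^ p + 1, by positivity, ?_⟩
    intro N hN k hk t ht
    obtain ⟨hk0, hkN, ht0, htN, ht1, hfirst, hterm⟩ := key N hN k hk t ht
    rw [if_neg hcase]
    have hN0 : (0:ℝ) < N := by positivity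
    have hkT : k ≤ T ^ (1/γ) := by
      rw [hk]
      apply div_le_self (Real.rpow_pos_of_pos hT _).le
      exact_mod_cast hN.trans' (by norm_num)
    -- per-term telescoping bound
    have hstep : ∀ n ∈ Finset.Icc 2 N, ((n:ℝ)) ^ (β - 3)
        ≤ Q * (((n:ℝ)) ^ p - (((n:ℝ)) - 1) ^ p) := by
      intro n hn
      rw [Finset.mem_Icc] at hn
      have hu2 : (2:ℝ) ≤ (n:ℝ) := by exact_mod_cast hn.1
      set u : ℝ := (n:ℝ)
      have hu1 : (0:ℝ) < u - 1 := by linarith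
      have hdiff0 : 0 ≤ u ^ p - (u - 1) ^ p := by
        have := Real.rpow_le_rpow (by linarith : (0:ℝ) ≤ u - 1)
          (by linarith : u - 1 ≤ u) hp_pos.le
        linarith
      have hβ3 : β - 3 = p - 1 := by rw [hp]; ring
      rw [hβ3]
      by_cases hp1 : 1 ≤ p
      · have h := myL2 hp1 hu1 (by linarith : u - 1 ≤ u)
        have h1 : p * (u-1) ^ (p-1) ≤ u ^ p - (u-1) ^ p := by
          calc p * (u-1) ^ (p-1) = p * (u-1) ^ (p-1) * (u - (u-1)) := by ring
            _ ≤ u ^ p - (u-1) ^ p := h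
        have h2 : (u/2) ^ (p-1) ≤ (u-1) ^ (p-1) :=
          Real.rpow_le_rpow (by positivity) (by linarith) (by linarith)
        have h3 : (u/2) ^ (p-1) = u ^ (p-1) / 2 ^ (p-1) :=
          Real.div_rpow (by positivity) (by norm_num) _
        have h2p : (0:ℝ) < 2 ^ (p-1) := Real.rpow_pos_of_pos (by norm_num) _
        rw [h3] at h2
        have hup : 0 ≤ u ^ (p-1) := Real.rpow_nonneg (by positivity) _
        rw [hQ]
        rw [div_mul_eq_mul_div, le_div_iff₀ hp_pos]
        calc u ^ (p-1) * p = p * (u ^ (p-1) / 2 ^ (p-1)) * 2 ^ (p-1) := by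
              field_simp
          _ ≤ (u ^ p - (u-1) ^ p) * 2 ^ (p-1) := by
              apply mul_le_mul_of_nonneg_right _ h2p.le
              calc p * (u ^ (p-1) / 2 ^ (p-1)) ≤ p * (u-1) ^ (p-1) :=
                    mul_le_mul_of_nonneg_left h2 hp_pos.le
                _ ≤ u ^ p - (u-1) ^ p := h1
          _ ≤ (2 ^ (p-1) + 1) * (u ^ p - (u - 1) ^ p) := by
              have e : (2 ^ (p-1) + 1) * (u ^ p - (u - 1) ^ p)
                  = (u ^ p - (u-1) ^ p) * 2 ^ (p-1) + (u ^ p - (u-1) ^ p) := by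
                ring
              rw [e]
              linarith
      · push_neg at hp1
        have h := myL3 hp0 hp1.le hu1 (by linarith : u - 1 ≤ u)
        have h1 : p * u ^ (p-1) ≤ u ^ p - (u-1) ^ p := by
          calc p * u ^ (p-1) = p * u ^ (p-1) * (u - (u-1)) := by ring
            _ ≤ u ^ p - (u-1) ^ p := h
        rw [hQ, div_mul_eq_mul_div, le_div_iff₀ hp_pos]
        have h2p : (0:ℝ) < 2 ^ (p-1) := Real.rpow_pos_of_pos (by norm_num) _
        have e : (2 ^ (p-1) + 1) * (u ^ p - (u - 1) ^ p)
            = 2 ^ (p-1) * (u ^ p - (u-1) ^ p) + (u ^ p - (u-1) ^ p) := by ring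
        rw [e]
        have h4 := mul_nonneg h2p.le hdiff0
        linarith
    have hcastsub : ∀ n ∈ Finset.Icc 2 N,
        (((n - 1 : ℕ) : ℝ)) = ((n:ℝ)) - 1 := by
      intro n hn
      rw [Finset.mem_Icc] at hn
      rw [Nat.cast_sub (by omega : 1 ≤ n)]; norm_num
    have htel : ∑ n ∈ Finset.Icc 2 N,
        (((n:ℝ)) ^ p - (((n:ℝ)) - 1) ^ p) = (N:ℝ) ^ p - 1 := by
      have h0 := mytel (fun m : ℕ => ((m:ℝ)) ^ p) N (by omega)
      simp only [Nat.cast_one, Real.one_rpow] at h0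
      rw [← h0]
      apply Finset.sum_congr rfl
      intro n hn
      simp only [hcastsub n hn]
    have hNp1 : (1:ℝ) ≤ (N:ℝ) ^ p :=
      Real.one_le_rpow (by exact_mod_cast hN.trans' (by norm_num)) hp_pos.le
    have hsum : ∑ n ∈ Finset.Icc 2 N, (t n - t (n - 1)) *
            ‖(2:ℝ)⁻¹ • (w (t n) + w (t (n - 1)))
              - (t n - t (n - 1))⁻¹ • ∫ s in (t (n - 1))..(t n), w s‖
        ≤ D * Q * (k ^ β * (N:ℝ) ^ p) := by
      calc ∑ n ∈ Finset.Icc 2 N, (t n - t (n - 1)) *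
            ‖(2:ℝ)⁻¹ • (w (t n) + w (t (n - 1)))
              - (t n - t (n - 1))⁻¹ • ∫ s in (t (n - 1))..(t n), w s‖
          ≤ ∑ n ∈ Finset.Icc 2 N, D * ((n:ℝ)) ^ (β - 3) * k ^ β :=
            Finset.sum_le_sum hterm
        _ ≤ ∑ n ∈ Finset.Icc 2 N,
              D * Q * (((n:ℝ)) ^ p - (((n:ℝ)) - 1) ^ p) * k ^ β := by
            apply Finset.sum_le_sum
            intro n hn
            have hkb : 0 ≤ k ^ β := (Real.rpow_pos_of_pos hk0 β).le
            have := hstep n hn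
            apply mul_le_mul_of_nonneg_right _ hkb
            calc D * ((n:ℝ)) ^ (β - 3)
                ≤ D * (Q * (((n:ℝ)) ^ p - (((n:ℝ)) - 1) ^ p)) :=
                  mul_le_mul_of_nonneg_left this hD0.le
              _ = D * Q * (((n:ℝ)) ^ p - (((n:ℝ)) - 1) ^ p) := by ring
        _ = D * Q * k ^ β * ((N:ℝ) ^ p - 1) := by
            rw [← htel, Finset.mul_sum]
            apply Finset.sum_congr rfl
            intro n hn
            ring
        _ ≤ D * Q * (k ^ β * (N:ℝ) ^ p) := by
            have hkb : 0 ≤ k ^ β := (Real.rpow_pos_of_pos hk0 β).le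
            have : D * Q * k ^ β * ((N:ℝ) ^ p - 1) ≤ D * Q * k ^ β * (N:ℝ) ^ p := by
              apply mul_le_mul_of_nonneg_left (by linarith) (by positivity)
            linarith [this]
    -- convert k^β to k² times powers
    have hk2 : (0:ℝ) ≤ k ^ (2:ℕ) := by positivity
    have hkβ2 : k ^ β = k ^ (2:ℕ) * k ^ p := by
      rw [← Real.rpow_natCast k 2, ← Real.rpow_add hk0]
      congr 1
      rw [hp]
      push_cast
      ring
    have hkNp : k ^ p * (N:ℝ) ^ p = (T ^ (1/γ)) ^ p := by
      rw [← Real.mul_rpow hk0.le hN0.le, mul_comm k (N:ℝ), hkN]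
    have hkpS : k ^ p ≤ (T ^ (1/γ)) ^ p :=
      Real.rpow_le_rpow hk0.le hkT hp_pos.le
    have hfinal1 : C / α * k ^ β ≤ C / α * (T ^ (1/γ)) ^ p * k ^ (2:ℕ) := by
      rw [hkβ2]
      calc C / α * (k ^ (2:ℕ) * k ^ p) = (C / α) * k ^ p * k ^ (2:ℕ) := by ring
        _ ≤ C / α * (T ^ (1/γ)) ^ p * k ^ (2:ℕ) := by
            apply mul_le_mul_of_nonneg_right _ hk2
            exact mul_le_mul_of_nonneg_left hkpS (by positivity)
    have hfinal2 : D * Q * (k ^ β * (N:ℝ) ^ p)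
        = D * Q * (T ^ (1/γ)) ^ p * k ^ (2:ℕ) := by
      rw [hkβ2]
      calc D * Q * (k ^ (2:ℕ) * k ^ p * (N:ℝ) ^ p)
          = D * Q * (k ^ p * (N:ℝ) ^ p) * k ^ (2:ℕ) := by ring
        _ = D * Q * (T ^ (1/γ)) ^ p * k ^ (2:ℕ) := by rw [hkNp]
    calc (t 1 - t 0) * ‖w (t 1) - (t 1 - t 0)⁻¹ • ∫ s in (t 0)..(t 1), w s‖
        + ∑ n ∈ Finset.Icc 2 N, (t n - t (n - 1)) *
            ‖(2:ℝ)⁻¹ • (w (t n) + w (t (n - 1)))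
              - (t n - t (n - 1))⁻¹ • ∫ s in (t (n - 1))..(t n), w s‖
        ≤ C / α * (T ^ (1/γ)) ^ p * k ^ (2:ℕ)
            + D * Q * (T ^ (1/γ)) ^ p * k ^ (2:ℕ) := by
          rw [hfinal2] at hsum
          linarith
      _ = (C / α + D * Q) * (T ^ (1/γ)) ^ p * k ^ (2:ℕ) := by ring
      _ ≤ ((C / α + D * Q) * (T ^ (1/γ)) ^ p + 1) * k ^ 2 := by
          apply mul_le_mul_of_nonneg_right _ hk2
          linarith
end

section
/- Let 0 < α < 1, κ ≥ 0, and suppose ‖v'(t)‖ ≤ C and ‖v''(t)‖ ≤ C t^{α−1} on (0,T]. With mesh satisfying k_n ≤ C_γ k, the quantities R_3^{1/2} = −κ( v(t_1) − (1/k_1)∫_0^{t_1} v(t)dt ) and R_3^{n−1/2} = −κ( (v(t_n)+v(t_{n−1}))/2 − (1/k_n)∫_{t_{n−1}}^{t_n} v(t)dt ) for n ≥ 2 satisfy Σ_{n=1}^N k_n ‖R_3^{n−1/2}‖ ≤ C κ k² (1 + t_N^α), with C depending only on α, γ, T. -/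
open MeasureTheory intervalIntegral Finset Real

section Aux

variable {H : Type*} [NormedAddCommGroup H] [NormedSpace ℝ H] [CompleteSpace H]

/-- Lipschitz bound for `v` from the bound on `v'`. -/
lemma stmt14_lip (T C : ℝ) (v v' : ℝ → H)
    (hd1 : ∀ t ∈ Set.Ioc (0:ℝ) T, HasDerivAt v (v' t) t)
    (hb1 : ∀ t ∈ Set.Ioc (0:ℝ) T, ‖v' t‖ ≤ C)
    {x y : ℝ} (hx : 0 < x) (hxy : x ≤ y) (hyT : y ≤ T) :
    ‖v y - v x‖ ≤ C * (y - x) := by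
  have h := Convex.norm_image_sub_le_of_norm_hasDerivWithin_le (f := v) (f' := v')
    (s := Set.Icc x y) (C := C)
    (fun u hu => (hd1 u ⟨lt_of_lt_of_le hx hu.1, hu.2.trans hyT⟩).hasDerivWithinAt)
    (fun u hu => hb1 u ⟨lt_of_lt_of_le hx hu.1, hu.2.trans hyT⟩)
    (convex_Icc x y) ⟨le_rfl, hxy⟩ ⟨hxy, le_rfl⟩
  have : ‖y - x‖ = y - x := by
    rw [Real.norm_eq_abs, abs_of_nonneg (by linarith)]
  rwa [this] at h

/-- First-interval bound. -/
lemma stmt14_first (T C : ℝ) (v v' : ℝ → H)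
    (hd1 : ∀ t ∈ Set.Ioc (0:ℝ) T, HasDerivAt v (v' t) t)
    (hb1 : ∀ t ∈ Set.Ioc (0:ℝ) T, ‖v' t‖ ≤ C)
    (hC : 0 ≤ C) {b : ℝ} (hb : 0 < b) (hbT : b ≤ T) :
    ‖v b - b⁻¹ • ∫ s in (0:ℝ)..b, v s‖ ≤ C * b := by
  have hbd : ∀ s ∈ Set.Ioc (0:ℝ) b, ‖v b - v s‖ ≤ C * b := by
    intro s hs
    have := stmt14_lip T C v v' hd1 hb1 hs.1 hs.2 hbT
    have hsb : C * (b - s) ≤ C * b := by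
      apply mul_le_mul_of_nonneg_left _ hC; linarith [hs.1]
    linarith
  -- integrability of v on (0, b]
  have hcont : ContinuousOn v (Set.Ioc 0 b) := fun s hs =>
    ((hd1 s ⟨hs.1, hs.2.trans hbT⟩).continuousAt).continuousWithinAt
  have hbv : ∀ s ∈ Set.Ioc (0:ℝ) b, ‖v s‖ ≤ ‖v b‖ + C * b := by
    intro s hs
    have := hbd s hs
    have h2 : ‖v s‖ - ‖v b‖ ≤ ‖v b - v s‖ := by
      have := norm_sub_norm_le (v b - v s) (v b)
      simp at this
      linarith [norm_sub_rev (v b) (v s), norm_sub_norm_le (v s) (v b),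
        abs_norm_sub_norm_le (v s) (v b)]
    linarith
  have hint : IntervalIntegrable v volume 0 b := by
    rw [intervalIntegrable_iff_integrableOn_Ioc_of_le hb.le]
    refine ⟨hcont.aestronglyMeasurable measurableSet_Ioc, ?_⟩
    apply HasFiniteIntegral.restrict_of_bounded (C := ‖v b‖ + C * b) measure_Ioc_lt_top
    filter_upwards [ae_restrict_mem measurableSet_Ioc] with s hs using hbv s hs
  have hconst : IntervalIntegrable (fun _ : ℝ => v b) volume 0 b :=
    intervalIntegrable_const
  have key : v b - b⁻¹ • ∫ s in (0:ℝ)..b, v s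
      = b⁻¹ • ∫ s in (0:ℝ)..b, (v b - v s) := by
    rw [intervalIntegral.integral_sub hconst hint, intervalIntegral.integral_const,
      smul_sub, sub_zero, smul_smul, inv_mul_cancel₀ hb.ne', one_smul]
  rw [key]
  have hnorm : ‖∫ s in (0:ℝ)..b, (v b - v s)‖ ≤ C * b * |b - 0| := by
    apply intervalIntegral.norm_integral_le_of_norm_le_const
    intro s hs
    rw [Set.uIoc_of_le hb.le] at hs
    exact hbd s hs
  rw [norm_smul, Real.norm_eq_abs, abs_of_nonneg (inv_nonneg.2 hb.le)]
  have : b⁻¹ * (C * b * |b - 0|) = C * b := by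
    rw [sub_zero, abs_of_nonneg hb.le]; field_simp
  calc b⁻¹ * ‖∫ s in (0:ℝ)..b, (v b - v s)‖ ≤ b⁻¹ * (C * b * |b - 0|) :=
        mul_le_mul_of_nonneg_left hnorm (inv_nonneg.2 hb.le)
    _ = C * b := this

/-- Bound on increments of `v'` using the bound on `v''`. -/
lemma stmt14_vp (α T C : ℝ) (hα : 0 < α ∧ α < 1) (hC : 0 ≤ C) (v' v'' : ℝ → H)
    (hd2 : ∀ t ∈ Set.Ioc (0:ℝ) T, HasDerivAt v' (v'' t) t)
    (hb2 : ∀ t ∈ Set.Ioc (0:ℝ) T, ‖v'' t‖ ≤ C * t ^ (α - 1))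
    {a b x y : ℝ} (ha : 0 < a) (hbT : b ≤ T)
    (hx : x ∈ Set.Icc a b) (hy : y ∈ Set.Icc a b) (hxy : x ≤ y) :
    ‖v' y - v' x‖ ≤ C / α * (b ^ α - a ^ α) := by
  obtain ⟨hα0, hα1⟩ := hα
  have hmem : ∀ u ∈ Set.Icc x y, u ∈ Set.Ioc (0:ℝ) T := fun u hu =>
    ⟨lt_of_lt_of_le ha (hx.1.trans hu.1), (hu.2.trans hy.2).trans hbT⟩
  have hx0 : (0:ℝ) < x := lt_of_lt_of_le ha hx.1
  have key : ‖v' y - v' x‖ ≤ C / α * (y ^ α - x ^ α) := by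
    have hres := image_norm_le_of_norm_deriv_right_le_deriv_boundary'
      (f := fun u => v' u - v' x) (f' := v'') (a := x) (b := y)
      (B := fun u => C / α * (u ^ α - x ^ α)) (B' := fun u => C * u ^ (α - 1))
      (fun u hu => (((hd2 u (hmem u hu)).continuousAt).continuousWithinAt).sub
        continuousWithinAt_const)
      (fun u hu => (((hd2 u (hmem u ⟨hu.1, hu.2.le⟩)).sub_const
        (v' x)).hasDerivWithinAt))
      (by simp)
      (by
        apply ContinuousOn.mul continuousOn_const
        apply ContinuousOn.sub _ continuousOn_const
        intro u hu
        exact (Real.continuousAt_rpow_const u α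
          (Or.inl (ne_of_gt (lt_of_lt_of_le hx0 hu.1)))).continuousWithinAt)
      (fun u hu => by
        have hu0 : u ≠ 0 := ne_of_gt (lt_of_lt_of_le hx0 hu.1)
        have h1 : HasDerivAt (fun u : ℝ => C / α * (u ^ α - x ^ α))
            (C / α * (α * u ^ (α - 1))) u := by
          exact (((Real.hasDerivAt_rpow_const (Or.inl hu0)).sub_const
            (x ^ α)).const_mul (C / α))
        have h2 : C / α * (α * u ^ (α - 1)) = C * u ^ (α - 1) := by
          field_simp
        rw [h2] at h1
        exact h1.hasDerivWithinAt)
      (fun u hu => hb2 u (hmem u ⟨hu.1, hu.2.le⟩))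
    have := hres (Set.right_mem_Icc.2 hxy)
    simpa using this
  have hmono : y ^ α - x ^ α ≤ b ^ α - a ^ α := by
    have h1 : y ^ α ≤ b ^ α :=
      Real.rpow_le_rpow (le_of_lt (lt_of_lt_of_le ha hy.1)) hy.2 hα0.le
    have h2 : a ^ α ≤ x ^ α := Real.rpow_le_rpow ha.le hx.1 hα0.le
    linarith
  calc ‖v' y - v' x‖ ≤ C / α * (y ^ α - x ^ α) := key
    _ ≤ C / α * (b ^ α - a ^ α) :=
      mul_le_mul_of_nonneg_left hmono (by positivity)

/-- Mid-interval (trapezoid) bound. -/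
lemma stmt14_mid (α T C : ℝ) (hα : 0 < α ∧ α < 1) (hC : 0 ≤ C) (v v' v'' : ℝ → H)
    (hd1 : ∀ t ∈ Set.Ioc (0:ℝ) T, HasDerivAt v (v' t) t)
    (hd2 : ∀ t ∈ Set.Ioc (0:ℝ) T, HasDerivAt v' (v'' t) t)
    (hb2 : ∀ t ∈ Set.Ioc (0:ℝ) T, ‖v'' t‖ ≤ C * t ^ (α - 1))
    {a b : ℝ} (ha : 0 < a) (hab : a < b) (hbT : b ≤ T) :
    ‖(2:ℝ)⁻¹ • (v b + v a) - (b - a)⁻¹ • ∫ s in a..b, v s‖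
      ≤ (b - a) * (2 * (C / α) * (b ^ α - a ^ α)) := by
  set m : ℝ := (a + b) / 2 with hm
  have hm_mem : m ∈ Set.Icc a b := ⟨by rw [hm]; linarith, by rw [hm]; linarith⟩
  have hmemT : ∀ u ∈ Set.Icc a b, u ∈ Set.Ioc (0:ℝ) T := fun u hu =>
    ⟨lt_of_lt_of_le ha hu.1, hu.2.trans hbT⟩
  set I : ℝ := C / α * (b ^ α - a ^ α) with hI
  have hba0 : (0:ℝ) < b - a := by linarith
  have hI0 : 0 ≤ I := by
    have h1 : a ^ α ≤ b ^ α := Real.rpow_le_rpow ha.le hab.le hα.1.le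
    exact mul_nonneg (div_nonneg hC hα.1.le) (by linarith)
  have hv'bd : ∀ u ∈ Set.Icc a b, ‖v' u - v' m‖ ≤ I := by
    intro u hu
    rcases le_total m u with h | h
    · exact stmt14_vp α T C hα hC v' v'' hd2 hb2 ha hbT hm_mem hu h
    · rw [norm_sub_rev]
      exact stmt14_vp α T C hα hC v' v'' hd2 hb2 ha hbT hu hm_mem h
  set w : ℝ → H := fun s => v s - (v m + (s - m) • v' m) with hw
  have hwderiv : ∀ s ∈ Set.Icc a b, HasDerivWithinAt w (v' s - v' m) (Set.Icc a b) s := by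
    intro s hs
    have h1 : HasDerivAt (fun s : ℝ => v m + (s - m) • v' m) (v' m) s := by
      have h2 := (((hasDerivAt_id s).sub_const m).smul_const (v' m)).const_add (v m)
      simpa using h2
    exact ((hd1 s (hmemT s hs)).sub h1).hasDerivWithinAt
  have hwbd : ∀ s ∈ Set.Icc a b, ‖w s‖ ≤ I * (b - a) := by
    intro s hs
    have hwm : w m = 0 := by simp [hw]
    have h := Convex.norm_image_sub_le_of_norm_hasDerivWithin_le
      hwderiv hv'bd (convex_Icc a b) hm_mem hs
    rw [hwm, sub_zero] at h
    have hsm : ‖s - m‖ ≤ b - a := by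
      rw [Real.norm_eq_abs]
      apply abs_le.2
      constructor <;> [linarith [hs.1, hm_mem.2]; linarith [hs.2, hm_mem.1]]
    calc ‖w s‖ ≤ I * ‖s - m‖ := h
      _ ≤ I * (b - a) := mul_le_mul_of_nonneg_left hsm hI0
  have hvc : ContinuousOn v (Set.Icc a b) := fun s hs =>
    ((hd1 s (hmemT s hs)).continuousAt).continuousWithinAt
  have hvint : IntervalIntegrable v volume a b := hvc.intervalIntegrable_of_Icc hab.le
  have hlinc : Continuous (fun s : ℝ => v m + (s - m) • v' m) := by fun_prop
  have hlint : IntervalIntegrable (fun s : ℝ => v m + (s - m) • v' m) volume a b :=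
    hlinc.intervalIntegrable a b
  have hlin_eval : (∫ s in a..b, (v m + (s - m) • v' m)) = (b - a) • v m := by
    have hc2 : Continuous (fun s : ℝ => (s - m) • v' m) := by fun_prop
    rw [intervalIntegral.integral_add intervalIntegrable_const (hc2.intervalIntegrable a b)]
    have h2 : (∫ s in a..b, (s - m) • v' m) = (0:H) := by
      rw [intervalIntegral.integral_smul_const]
      have h3 : (∫ s in a..b, (s - m)) = 0 := by
        rw [intervalIntegral.integral_sub intervalIntegrable_id intervalIntegrable_const,
          integral_id, intervalIntegral.integral_const]
        simp only [smul_eq_mul]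
        rw [hm]; ring
      rw [h3, zero_smul]
    rw [h2, intervalIntegral.integral_const, add_zero]
  have hsplit : (∫ s in a..b, v s) = (∫ s in a..b, w s) + (b - a) • v m := by
    have h4 : (∫ s in a..b, w s) = (∫ s in a..b, v s) - (b - a) • v m := by
      rw [hw, intervalIntegral.integral_sub hvint hlint, hlin_eval]
    rw [h4]; abel
  have hkey : (2:ℝ)⁻¹ • (v b + v a) - (b - a)⁻¹ • ∫ s in a..b, v s
      = (2:ℝ)⁻¹ • (w b + w a) - (b - a)⁻¹ • ∫ s in a..b, w s := by
    rw [hsplit, smul_add (b - a)⁻¹, smul_smul, inv_mul_cancel₀ hba0.ne', one_smul]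
    have hwb : w b = v b - v m - (b - m) • v' m := by rw [hw]; abel_nf
    have hwa : w a = v a - v m - (a - m) • v' m := by rw [hw]; abel_nf
    rw [hwb, hwa]
    have hsum : (b - m) • v' m + (a - m) • v' m = 0 := by
      rw [← add_smul]
      have : (b - m) + (a - m) = 0 := by rw [hm]; ring
      rw [this, zero_smul]
    have expand : (2:ℝ)⁻¹ • (v b - v m - (b - m) • v' m + (v a - v m - (a - m) • v' m))
        = (2:ℝ)⁻¹ • (v b + v a) - v m
          - (2:ℝ)⁻¹ • ((b - m) • v' m + (a - m) • v' m) := by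
      module
    rw [expand, hsum, smul_zero, sub_zero]
    abel
  rw [hkey]
  have h1 : ‖(2:ℝ)⁻¹ • (w b + w a)‖ ≤ I * (b - a) := by
    rw [norm_smul, Real.norm_eq_abs]
    have hb' := hwbd b ⟨hab.le, le_rfl⟩
    have ha' := hwbd a ⟨le_rfl, hab.le⟩
    have h5 := norm_add_le (w b) (w a)
    have : |(2:ℝ)⁻¹| = 2⁻¹ := by norm_num
    rw [this]
    nlinarith [norm_nonneg (w b + w a)]
  have h2 : ‖(b - a)⁻¹ • ∫ s in a..b, w s‖ ≤ I * (b - a) := by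
    rw [norm_smul, Real.norm_eq_abs, abs_of_nonneg (inv_nonneg.2 hba0.le)]
    have hn : ‖∫ s in a..b, w s‖ ≤ I * (b - a) * |b - a| := by
      apply intervalIntegral.norm_integral_le_of_norm_le_const
      intro s hs; rw [Set.uIoc_of_le hab.le] at hs
      exact hwbd s ⟨hs.1.le, hs.2⟩
    rw [abs_of_nonneg hba0.le] at hn
    calc (b - a)⁻¹ * ‖∫ s in a..b, w s‖ ≤ (b - a)⁻¹ * (I * (b - a) * (b - a)) :=
          mul_le_mul_of_nonneg_left hn (inv_nonneg.2 hba0.le)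
      _ = I * (b - a) := by field_simp
  calc ‖(2:ℝ)⁻¹ • (w b + w a) - (b - a)⁻¹ • ∫ s in a..b, w s‖
      ≤ ‖(2:ℝ)⁻¹ • (w b + w a)‖ + ‖(b - a)⁻¹ • ∫ s in a..b, w s‖ := norm_sub_le _ _
    _ ≤ I * (b - a) + I * (b - a) := add_le_add h1 h2
    _ = (b - a) * (2 * (C / α) * (b ^ α - a ^ α)) := by rw [hI]; ring


end Aux

/-- Lemma 4.6. -/
theorem stmt_14 {H : Type*} [NormedAddCommGroup H] [NormedSpace ℝ H] [CompleteSpace H]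
    (α κ T C Cγ : ℝ) (hα : 0 < α ∧ α < 1) (hκ : 0 ≤ κ) (hT : 0 < T) (hC : 0 < C)
    (hCγ : 0 < Cγ)
    (v v' v'' : ℝ → H)
    (hd1 : ∀ t ∈ Set.Ioc (0:ℝ) T, HasDerivAt v (v' t) t)
    (hd2 : ∀ t ∈ Set.Ioc (0:ℝ) T, HasDerivAt v' (v'' t) t)
    (hb1 : ∀ t ∈ Set.Ioc (0:ℝ) T, ‖v' t‖ ≤ C)
    (hb2 : ∀ t ∈ Set.Ioc (0:ℝ) T, ‖v'' t‖ ≤ C * t ^ (α - 1)) :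
    ∃ C' > 0, ∀ (N : ℕ) (t : ℕ → ℝ) (k : ℝ), 1 ≤ N → 0 < k →
      t 0 = 0 → (∀ n, 1 ≤ n → n ≤ N → t (n - 1) < t n) → t N ≤ T →
      (∀ n, 1 ≤ n → n ≤ N → t n - t (n - 1) ≤ Cγ * k) →
      (t 1 - t 0) * ‖(-κ : ℝ) • (v (t 1) - (t 1 - t 0)⁻¹ • ∫ s in (t 0)..(t 1), v s)‖
        + ∑ n ∈ Finset.Icc 2 N, (t n - t (n - 1)) *
            ‖(-κ : ℝ) • ((2:ℝ)⁻¹ • (v (t n) + v (t (n - 1)))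
              - (t n - t (n - 1))⁻¹ • ∫ s in (t (n - 1))..(t n), v s)‖
      ≤ C' * κ * k ^ 2 * (1 + (t N) ^ α) := by
  obtain ⟨hα0, hα1⟩ := hα
  refine ⟨Cγ ^ 2 * C * (2 / α + 1), by positivity, ?_⟩
  intro N t k hN hk ht0 hinc htNT hmesh
  have hmono : ∀ j ≤ N, ∀ i ≤ j, t i ≤ t j := by
    intro j hj
    induction j with
    | zero => intro i hi; interval_cases i; exact le_rfl
    | succ n ih =>
      intro i hi
      rcases Nat.lt_or_ge i (n + 1) with h | h
      · have h1 : t i ≤ t n := ih (by omega) i (by omega)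
        have h2 : t n < t (n + 1) := by
          have := hinc (n + 1) (by omega) hj
          simpa using this
        linarith
      · have : i = n + 1 := by omega
        rw [this]
  have ht1pos : 0 < t 1 := by
    have := hinc 1 le_rfl hN
    simp only [Nat.sub_self] at this
    rw [ht0] at this
    exact this
  have hpos : ∀ n, 1 ≤ n → n ≤ N → 0 < t n := fun n h1 h2 =>
    lt_of_lt_of_le ht1pos (hmono n h2 1 h1)
  have htN0 : 0 ≤ t N := (hpos N hN le_rfl).le
  have hNα : 0 ≤ (t N) ^ α := Real.rpow_nonneg htN0 α
  -- first term
  have ht1T : t 1 ≤ T := (hmono N le_rfl 1 hN).trans htNT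
  have ht1k : t 1 ≤ Cγ * k := by
    have := hmesh 1 le_rfl hN
    simp only [Nat.sub_self] at this
    rw [ht0] at this
    linarith
  have hfirst : (t 1 - t 0) * ‖(-κ : ℝ) • (v (t 1) - (t 1 - t 0)⁻¹ • ∫ s in (t 0)..(t 1), v s)‖
      ≤ κ * C * (Cγ * k) ^ 2 := by
    rw [ht0, sub_zero]
    have hF := stmt14_first T C v v' hd1 hb1 hC.le ht1pos ht1T
    rw [norm_smul, Real.norm_eq_abs, abs_neg, abs_of_nonneg hκ]
    have h1 : κ * ‖v (t 1) - (t 1)⁻¹ • ∫ s in (0:ℝ)..(t 1), v s‖ ≤ κ * (C * t 1) :=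
      mul_le_mul_of_nonneg_left hF hκ
    calc t 1 * (κ * ‖v (t 1) - (t 1)⁻¹ • ∫ s in (0:ℝ)..(t 1), v s‖)
        ≤ t 1 * (κ * (C * t 1)) := mul_le_mul_of_nonneg_left h1 ht1pos.le
      _ = κ * C * t 1 ^ 2 := by ring
      _ ≤ κ * C * (Cγ * k) ^ 2 := by
          apply mul_le_mul_of_nonneg_left _ (by positivity)
          exact pow_le_pow_left₀ ht1pos.le ht1k 2
  -- sum terms
  have hsum : ∑ n ∈ Finset.Icc 2 N, (t n - t (n - 1)) *
        ‖(-κ : ℝ) • ((2:ℝ)⁻¹ • (v (t n) + v (t (n - 1)))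
          - (t n - t (n - 1))⁻¹ • ∫ s in (t (n - 1))..(t n), v s)‖
      ≤ ∑ n ∈ Finset.Icc 2 N,
          κ * (2 * (C / α)) * (Cγ * k) ^ 2 * ((t n) ^ α - (t (n - 1)) ^ α) := by
    apply Finset.sum_le_sum
    intro n hn
    rw [Finset.mem_Icc] at hn
    obtain ⟨hn2, hnN⟩ := hn
    have ha : 0 < t (n - 1) := hpos (n - 1) (by omega) (by omega)
    have hab : t (n - 1) < t n := hinc n (by omega) hnN
    have hbT : t n ≤ T := (hmono N le_rfl n hnN).trans htNT
    have hd : 0 < t n - t (n - 1) := by linarith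
    have hdk : t n - t (n - 1) ≤ Cγ * k := hmesh n (by omega) hnN
    have hΔ : 0 ≤ (t n) ^ α - (t (n - 1)) ^ α := by
      have := Real.rpow_le_rpow ha.le hab.le hα0.le
      linarith
    have hM := stmt14_mid α T C ⟨hα0, hα1⟩ hC.le v v' v'' hd1 hd2 hb2 ha hab hbT
    rw [norm_smul, Real.norm_eq_abs, abs_neg, abs_of_nonneg hκ]
    have h1 : κ * ‖(2:ℝ)⁻¹ • (v (t n) + v (t (n - 1)))
          - (t n - t (n - 1))⁻¹ • ∫ s in (t (n - 1))..(t n), v s‖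
        ≤ κ * ((t n - t (n - 1)) * (2 * (C / α) * ((t n) ^ α - (t (n - 1)) ^ α))) :=
      mul_le_mul_of_nonneg_left hM hκ
    calc (t n - t (n - 1)) * (κ * ‖(2:ℝ)⁻¹ • (v (t n) + v (t (n - 1)))
          - (t n - t (n - 1))⁻¹ • ∫ s in (t (n - 1))..(t n), v s‖)
        ≤ (t n - t (n - 1)) *
            (κ * ((t n - t (n - 1)) * (2 * (C / α) * ((t n) ^ α - (t (n - 1)) ^ α)))) :=
          mul_le_mul_of_nonneg_left h1 hd.le
      _ = κ * (2 * (C / α)) * ((t n) ^ α - (t (n - 1)) ^ α) * (t n - t (n - 1)) ^ 2 := by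
          ring
      _ ≤ κ * (2 * (C / α)) * ((t n) ^ α - (t (n - 1)) ^ α) * (Cγ * k) ^ 2 := by
          apply mul_le_mul_of_nonneg_left _ (by positivity)
          exact pow_le_pow_left₀ hd.le hdk 2
      _ = κ * (2 * (C / α)) * (Cγ * k) ^ 2 * ((t n) ^ α - (t (n - 1)) ^ α) := by ring
  have htel : ∀ M, 1 ≤ M → ∑ n ∈ Finset.Icc 2 M, ((t n) ^ α - (t (n - 1)) ^ α)
      = (t M) ^ α - (t 1) ^ α := by
    intro M hM
    induction M, hM using Nat.le_induction with
    | base => simp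
    | succ M hM ih =>
      rw [Finset.sum_Icc_succ_top (by omega : 2 ≤ M + 1)]
      simp only [Nat.add_sub_cancel]
      rw [ih]
      ring
  have hsum2 : ∑ n ∈ Finset.Icc 2 N,
        κ * (2 * (C / α)) * (Cγ * k) ^ 2 * ((t n) ^ α - (t (n - 1)) ^ α)
      = κ * (2 * (C / α)) * (Cγ * k) ^ 2 * ((t N) ^ α - (t 1) ^ α) := by
    rw [← Finset.mul_sum, htel N hN]
  have ht1α : 0 ≤ (t 1) ^ α := Real.rpow_nonneg ht1pos.le α
  have hmain := add_le_add hfirst (hsum.trans (le_of_eq hsum2))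
  have hdrop : κ * (2 * (C / α)) * (Cγ * k) ^ 2 * ((t N) ^ α - (t 1) ^ α)
      ≤ κ * (2 * (C / α)) * (Cγ * k) ^ 2 * (t N) ^ α := by
    apply mul_le_mul_of_nonneg_left (by linarith) (by positivity)
  have h1 : 0 ≤ κ * Cγ ^ 2 * k ^ 2 * C * (2 / α) := by positivity
  have h2 : 0 ≤ κ * Cγ ^ 2 * k ^ 2 * C * (t N) ^ α :=
    mul_nonneg (by positivity) hNα
  have hident : Cγ ^ 2 * C * (2 / α + 1) * κ * k ^ 2 * (1 + (t N) ^ α)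
      = κ * C * (Cγ * k) ^ 2 + κ * (2 * (C / α)) * (Cγ * k) ^ 2 * (t N) ^ α
        + (κ * Cγ ^ 2 * k ^ 2 * C * (2 / α) + κ * Cγ ^ 2 * k ^ 2 * C * (t N) ^ α) := by
    ring
  linarith [hmain, hdrop, h1, h2]
end
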